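/- arXiv:1502.02192 — 9 statements merged into one kernel-verified Lean document; each statement's English description precedes it below -/
import Mathlib

section
/- Let B be a finite group. Then the commutator identity ⁅X ⊓ Y, Y⁆ = X ⊓ ⁅Y, Y⁆ holds for all normal subgroups X, Y of B if and only if ⁅N, N⁆ ≤ D holds for every relevant triple (D, T, N) of B. -/
open scoped Pointwise
open scoped commutatorElement

section Aux

variable {G : Type*} [Group G]

/-- The centralizer of a normal subgroup is normal. -/
lemma centralizer_normal_of_normal (H : Subgroup G) (hH : H.Normal) :
    (Subgroup.centralizer (H : Set G)).Normal := by
  constructor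
  intro z hz g
  rw [Subgroup.mem_centralizer_iff] at hz ⊢
  intro h hh
  have h1 := hz (g⁻¹ * h * g⁻¹⁻¹) (hH.conj_mem h hh g⁻¹)
  calc h * (g * z * g⁻¹) = g * ((g⁻¹ * h * g⁻¹⁻¹) * z) * g⁻¹ := by group
    _ = g * (z * (g⁻¹ * h * g⁻¹⁻¹)) * g⁻¹ := by rw [h1]
    _ = (g * z * g⁻¹) * h := by group

/-- Characterization of `⁅T, K⁆ ≤ D` via the centralizer of the image of `T` in `G ⧸ D`. -/
lemma commutator_le_iff_le_comap (D T K : Subgroup G) (hD : D.Normal) :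
    ⁅T, K⁆ ≤ D ↔
      K ≤ (Subgroup.centralizer ((T.map (QuotientGroup.mk' D)) : Set (G ⧸ D))).comap
            (QuotientGroup.mk' D) := by
  haveI := hD
  rw [Subgroup.commutator_le]
  constructor
  · intro h k hk
    rw [Subgroup.mem_comap, Subgroup.mem_centralizer_iff]
    rintro x hx
    rw [SetLike.mem_coe, Subgroup.mem_map] at hx
    obtain ⟨t, ht, rfl⟩ := hx
    have h1 : (QuotientGroup.mk' D) ⁅t, k⁆ = 1 := by
      rw [QuotientGroup.mk'_apply, QuotientGroup.eq_one_iff]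
      exact h t ht k hk
    rw [map_commutatorElement, commutatorElement_eq_one_iff_mul_comm] at h1
    exact h1
  · intro h t ht k hk
    have h1 := h hk
    rw [Subgroup.mem_comap, Subgroup.mem_centralizer_iff] at h1
    have h2 := h1 ((QuotientGroup.mk' D) t)
      (by rw [SetLike.mem_coe]; exact Subgroup.mem_map_of_mem _ ht)
    have h3 : (QuotientGroup.mk' D) ⁅t, k⁆ = 1 := by
      rw [map_commutatorElement, commutatorElement_eq_one_iff_mul_comm]
      exact h2
    rwa [QuotientGroup.mk'_apply, QuotientGroup.eq_one_iff] at h3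

lemma sInf_normal {S : Set (Subgroup G)} (hS : ∀ H ∈ S, H.Normal) : (sInf S).Normal := by
  constructor
  intro n hn g
  rw [Subgroup.mem_sInf] at hn ⊢
  intro H hH
  exact (hS H hH).conj_mem n (hn H hH) g

end Aux

/-- In the lattice of normal subgroups of a group `G`, `(D, T, N)` is a *relevant triple* if:
`D` is completely meet-irreducible with unique upper cover `T`, the prime quotient `T/D`
is abelian (`⁅T, T⁆ ≤ D`), and `N` is the largest normal subgroup with `⁅T, N⁆ ≤ D`
(the centralizer `(D : T)`). -/
def RelevantTriple {G : Type*} [Group G] (D T N : Subgroup G) : Prop :=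
  D.Normal ∧ T.Normal ∧ N.Normal ∧
  D < T ∧ (∀ X : Subgroup G, X.Normal → D < X → T ≤ X) ∧
  ⁅T, T⁆ ≤ D ∧
  ⁅T, N⁆ ≤ D ∧ (∀ N' : Subgroup G, N'.Normal → ⁅T, N'⁆ ≤ D → N' ≤ N)

/-- For a finite group `B`, the commutator identity (C1),
`⁅X ⊓ Y, Y⁆ = X ⊓ ⁅Y, Y⁆` for all normal subgroups `X, Y`, holds if and only if
`⁅N, N⁆ ≤ D` for every relevant triple `(D, T, N)` of `B`. -/
theorem C1_iff_relevant_triples_abelian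
    {B : Type*} [Group B] [Finite B] :
    (∀ X Y : Subgroup B, X.Normal → Y.Normal → ⁅X ⊓ Y, Y⁆ = X ⊓ ⁅Y, Y⁆) ↔
    (∀ D T N : Subgroup B, RelevantTriple D T N → ⁅N, N⁆ ≤ D) := by
  constructor
  · -- (C1) → relevant triples abelian
    rintro hC1 D T N ⟨hDn, hTn, hNn, hDT, hcov, hTT, hTN, hmax⟩
    haveI := hDn; haveI := hTn; haveI := hNn
    have hTleN : T ≤ N := hmax T hTn hTT
    have h1 : ⁅T ⊓ N, N⁆ = T ⊓ ⁅N, N⁆ := hC1 T N hTn hNn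
    rw [inf_eq_left.mpr hTleN] at h1
    have h2 : T ⊓ ⁅N, N⁆ ≤ D := h1 ▸ hTN
    by_contra hnot
    haveI : (⁅N, N⁆ : Subgroup B).Normal := Subgroup.commutator_normal N N
    have hsupn : (D ⊔ ⁅N, N⁆).Normal := Subgroup.sup_normal D ⁅N, N⁆
    have hlt : D < D ⊔ ⁅N, N⁆ :=
      lt_of_le_of_ne le_sup_left (fun h => hnot (le_trans le_sup_right h.ge))
    have hT2 : T ≤ D ⊔ ⁅N, N⁆ := hcov _ hsupn hlt
    obtain ⟨t, htT, htD⟩ := SetLike.exists_of_lt hDT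
    have hmem : t ∈ ((D : Set B) * ((⁅N, N⁆ : Subgroup B) : Set B)) := by
      rw [← Subgroup.normal_mul]; exact hT2 htT
    obtain ⟨d, hd, k, hk, hdk⟩ := hmem
    have hkT : k ∈ T := by
      have hkdt : k = d⁻¹ * t := by rw [← hdk]; group
      rw [hkdt]; exact T.mul_mem (T.inv_mem (hDT.le hd)) htT
    have hkD : k ∈ D := h2 ⟨hkT, hk⟩
    exact htD (by rw [← hdk]; exact D.mul_mem hd hkD)
  · -- relevant triples abelian → (C1)
    intro hRT X Y hXn hYn
    haveI := hXn; haveI := hYn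
    haveI : (X ⊓ Y).Normal := Subgroup.normal_inf_normal X Y
    haveI : (⁅Y, Y⁆ : Subgroup B).Normal := Subgroup.commutator_normal Y Y
    refine le_antisymm
      (le_inf ((Subgroup.commutator_mono inf_le_left le_rfl).trans
        (Subgroup.commutator_le_left X Y))
        (Subgroup.commutator_mono inf_le_right le_rfl)) ?_
    by_contra hnot
    obtain ⟨b, hbXY, hbA⟩ := SetLike.not_le_iff_exists.mp hnot
    set A : Subgroup B := ⁅X ⊓ Y, Y⁆ with hA
    haveI hAn : A.Normal := Subgroup.commutator_normal _ _
    -- choose D maximal among normal subgroups containing A and avoiding b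
    set S : Set (Subgroup B) := {Z | Z.Normal ∧ A ≤ Z ∧ b ∉ Z} with hS
    have hAS : A ∈ S := ⟨hAn, le_rfl, hbA⟩
    obtain ⟨D, hDS, hDmax⟩ := Set.Finite.exists_maximalFor id S (Set.toFinite S) ⟨A, hAS⟩
    obtain ⟨hDn, hAD, hbD⟩ := hDS
    haveI := hDn
    have hDprop : ∀ Z : Subgroup B, Z.Normal → D < Z → b ∈ Z := by
      intro Z hZ hlt
      by_contra hbZ
      exact hlt.ne (le_antisymm hlt.le (hDmax ⟨hZ, hAD.trans hlt.le, hbZ⟩ hlt.le))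
    -- the unique upper cover T
    set T : Subgroup B := sInf {Z | Z.Normal ∧ D < Z} with hT
    have hTn : T.Normal := sInf_normal (fun H hH => hH.1)
    have hDleT : D ≤ T := le_sInf (fun Z hZ => hZ.2.le)
    have hbT : b ∈ T := Subgroup.mem_sInf.mpr (fun Z hZ => hDprop Z hZ.1 hZ.2)
    have hDT : D < T := lt_of_le_of_ne hDleT (fun h => hbD (h ▸ hbT))
    have hcov : ∀ Z : Subgroup B, Z.Normal → D < Z → T ≤ Z := fun Z h1 h2 => sInf_le ⟨h1, h2⟩
    -- the centralizer N of T/D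
    set π := QuotientGroup.mk' D with hπ
    set N : Subgroup B :=
      (Subgroup.centralizer ((T.map π) : Set (B ⧸ D))).comap π with hN
    have hNc : ∀ K : Subgroup B, ⁅T, K⁆ ≤ D ↔ K ≤ N := fun K =>
      commutator_le_iff_le_comap D T K hDn
    have hNn : N.Normal :=
      (centralizer_normal_of_normal _ (hTn.map π (QuotientGroup.mk'_surjective D))).comap π
    -- the subgroup K = X ⊓ ⁅Y,Y⁆ and T ≤ D ⊔ K
    set K : Subgroup B := X ⊓ ⁅Y, Y⁆ with hK
    haveI hKn : K.Normal := Subgroup.normal_inf_normal X ⁅Y, Y⁆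
    have hKY : K ≤ Y := inf_le_right.trans (Subgroup.commutator_le_right Y Y)
    have hKA : ⁅K, Y⁆ ≤ A := Subgroup.commutator_mono (le_inf inf_le_left hKY) le_rfl
    have hDKn : (D ⊔ K).Normal := Subgroup.sup_normal D K
    have hDK : D < D ⊔ K :=
      lt_of_le_of_ne le_sup_left (fun h => hbD (h ▸ (le_sup_right (a := D) hbXY)))
    have hTDK : T ≤ D ⊔ K := hcov _ hDKn hDK
    -- Y centralizes T modulo D
    have hYT : ⁅Y, T⁆ ≤ D := by
      rw [commutator_le_iff_le_comap D Y T hDn]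
      refine hTDK.trans (sup_le ?_ ?_)
      · rw [← commutator_le_iff_le_comap D Y D hDn]
        exact Subgroup.commutator_le_right Y D
      · rw [← commutator_le_iff_le_comap D Y K hDn]
        exact (Subgroup.commutator_comm Y K ▸ hKA).trans hAD
    have hYN : Y ≤ N := (hNc Y).mp (Subgroup.commutator_comm T Y ▸ hYT)
    have hDN : D ≤ N := (hNc D).mp ((Subgroup.commutator_le_right T D).trans le_rfl)
    have hTleN : T ≤ N := hTDK.trans (sup_le hDN (hKY.trans hYN))
    have hTND : ⁅T, N⁆ ≤ D := (hNc N).mpr le_rfl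
    have hTT : ⁅T, T⁆ ≤ D := (Subgroup.commutator_mono le_rfl hTleN).trans hTND
    have hrel : RelevantTriple D T N :=
      ⟨hDn, hTn, hNn, hDT, hcov, hTT, hTND, fun N' _ h => (hNc N').mp h⟩
    have hYY : ⁅Y, Y⁆ ≤ D := (Subgroup.commutator_mono hYN hYN).trans (hRT D T N hrel)
    exact hbD (hYY hbXY.2)
end

section
/- Let G be a finite group such that for every normal subgroup M of G for which the quotient G/M is subdirectly irreducible, G/M is solvable or G/M satisfies (C8). Then there exists exactly one pair (S, R) of normal subgroups of G such that S ⊓ R = ⊥, S ⊔ R = ⊤, G/S is solvable, and G/R satisfies (C8). Moreover, every normal subgroup X of G satisfies X = (X ⊔ S) ⊓ (X ⊔ R). -/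
/-- The quotient `G/M` is subdirectly irreducible: the intersection of all normal subgroups
of `G` strictly containing `M` strictly contains `M`. -/
def QuotSubdirectlyIrreducible {G : Type*} [Group G] (M : Subgroup G) : Prop :=
  M < sInf {X : Subgroup G | X.Normal ∧ M < X}

/-- A group `Q` satisfies (C8) if `⁅Q, X⁆ = X` for every normal subgroup `X` of `Q`. -/
def IsC8 (Q : Type*) [Group Q] : Prop :=
  ∀ X : Subgroup Q, X.Normal → ⁅(⊤ : Subgroup Q), X⁆ = X

/-- The quotient `G/M` is solvable. -/
def QuotSolvable {G : Type*} [Group G] (M : Subgroup G) (hM : M.Normal) : Prop :=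
  haveI := hM
  IsSolvable (G ⧸ M)

/-- The quotient `G/M` satisfies (C8). -/
def QuotC8 {G : Type*} [Group G] (M : Subgroup G) (hM : M.Normal) : Prop :=
  haveI := hM
  IsC8 (G ⧸ M)

namespace C8Factorization

open Subgroup
open scoped commutatorElement

variable {G : Type*} [Group G]

theorem mem_sup_of_normal {H K : Subgroup G} (hK : K.Normal) {z : G} (hz : z ∈ H ⊔ K) :
    ∃ x ∈ H, ∃ y ∈ K, z = x * y := by
  haveI := hK
  have h : z ∈ (↑(H ⊔ K) : Set G) := hz
  rw [Subgroup.mul_normal H K] at h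
  obtain ⟨x, hx, y, hy, hxy⟩ := h
  exact ⟨x, hx, y, hy, hxy.symm⟩

theorem commutator_sup_le_left (H K X : Subgroup G) (hH : H.Normal) (hK : K.Normal)
    (hX : X.Normal) : ⁅H ⊔ K, X⁆ ≤ ⁅H, X⁆ ⊔ ⁅K, X⁆ := by
  haveI := hH; haveI := hK; haveI := hX
  rw [Subgroup.commutator_le]
  intro g hg x hx
  obtain ⟨a, ha, b, hb, rfl⟩ := mem_sup_of_normal hK hg
  have hid : ⁅a * b, x⁆ = a * ⁅b, x⁆ * a⁻¹ * ⁅a, x⁆ := by group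
  rw [hid]
  have h1 : a * ⁅b, x⁆ * a⁻¹ ∈ ⁅K, X⁆ :=
    (Subgroup.commutator_normal K X).conj_mem _ (commutator_mem_commutator hb hx) a
  exact mul_mem ((le_sup_right : ⁅K,X⁆ ≤ _) h1)
    ((le_sup_left : ⁅H,X⁆ ≤ _) (commutator_mem_commutator ha hx))

theorem commutator_sup_le_right (X H K : Subgroup G) (hH : H.Normal) (hK : K.Normal)
    (hX : X.Normal) : ⁅X, H ⊔ K⁆ ≤ ⁅X, H⁆ ⊔ ⁅X, K⁆ := by
  rw [Subgroup.commutator_comm]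
  refine (commutator_sup_le_left H K X hH hK hX).trans ?_
  rw [Subgroup.commutator_comm H X, Subgroup.commutator_comm K X]

/-- characterization of C8 quotients in terms of normal subgroups of `G`. -/
theorem quotC8_iff (M : Subgroup G) (hM : M.Normal) :
    QuotC8 M hM ↔ ∀ X : Subgroup G, X.Normal → M ≤ X →
      ⁅(⊤ : Subgroup G), X⁆ ⊔ M = X := by
  haveI := hM
  show IsC8 (G ⧸ M) ↔ _
  set f := QuotientGroup.mk' M with hf
  have hsurj : Function.Surjective f := QuotientGroup.mk'_surjective M
  have hker : f.ker = M := QuotientGroup.ker_mk' M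
  constructor
  · intro h X hX hMX
    haveI := hX
    have hXmap : (X.map f).Normal := hX.map f hsurj
    have h2 := h (X.map f) hXmap
    have h3 : Subgroup.map f (⁅(⊤ : Subgroup G), X⁆ ⊔ M) = Subgroup.map f X := by
      rw [Subgroup.map_sup, Subgroup.map_commutator,
        Subgroup.map_top_of_surjective f hsurj, h2]
      have : Subgroup.map f M = ⊥ := by
        rw [Subgroup.map_eq_bot_iff, hker]
      rw [this, sup_bot_eq]
    have h4 := congrArg (Subgroup.comap f) h3
    rwa [Subgroup.comap_map_eq, Subgroup.comap_map_eq, hker, sup_assoc, sup_idem,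
      sup_eq_left.mpr hMX] at h4
  · intro h Y hY
    have hXnorm : (Y.comap f).Normal := hY.comap f
    have hMle : M ≤ Y.comap f := by
      intro a ha
      have : f a = 1 := by rwa [← MonoidHom.mem_ker, hker]
      simpa [Subgroup.mem_comap, this] using Y.one_mem
    have h2 := h (Y.comap f) hXnorm hMle
    have h3 := congrArg (Subgroup.map f) h2
    rwa [Subgroup.map_sup, Subgroup.map_commutator, Subgroup.map_top_of_surjective f hsurj,
      Subgroup.map_comap_eq_self_of_surjective hsurj,
      (by rw [Subgroup.map_eq_bot_iff, hker] : Subgroup.map f M = ⊥), sup_bot_eq] at h3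

theorem quotSolvable_iff (M : Subgroup G) (hM : M.Normal) :
    QuotSolvable M hM ↔ ∃ n, derivedSeries G n ≤ M := by
  haveI := hM
  show Group.IsSolvable (G ⧸ M) ↔ _
  rw [isSolvable_def]
  have hsurj : Function.Surjective (QuotientGroup.mk' M) := QuotientGroup.mk'_surjective M
  constructor
  · rintro ⟨n, hn⟩
    refine ⟨n, ?_⟩
    rw [← map_derivedSeries_eq hsurj n, Subgroup.map_eq_bot_iff, QuotientGroup.ker_mk'] at hn
    exact hn
  · rintro ⟨n, hn⟩
    refine ⟨n, ?_⟩
    rw [← map_derivedSeries_eq hsurj n, Subgroup.map_eq_bot_iff, QuotientGroup.ker_mk']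
    exact hn



theorem perfect_le_derivedSeries (K : Subgroup G) (hK : ⁅K, K⁆ = K) :
    ∀ n, K ≤ derivedSeries G n := by
  intro n
  induction n with
  | zero => exact le_top
  | succ n ih =>
    rw [derivedSeries_succ, ← hK]
    exact commutator_mono ih ih

theorem exists_stable_derived [Finite G] :
    ∃ n₀, ⁅derivedSeries G n₀, derivedSeries G n₀⁆ = derivedSeries G n₀ ∧
      ∀ k, derivedSeries G n₀ ≤ derivedSeries G k := by
  haveI : Finite (Subgroup G) :=
    Finite.of_injective (fun H : Subgroup G => (H : Set G)) SetLike.coe_injective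
  have anti : ∀ i j : ℕ, i ≤ j → derivedSeries G j ≤ derivedSeries G i := by
    intro i j hij
    induction j with
    | zero => simp_all
    | succ j ih =>
      rcases Nat.lt_or_ge i (j+1) with h | h
      · refine le_trans ?_ (ih (Nat.lt_succ_iff.mp h))
        rw [derivedSeries_succ]
        haveI := derivedSeries_normal G j
        exact Subgroup.commutator_le_left _ _
      · have : i = j + 1 := le_antisymm hij h
        rw [this]
  obtain ⟨a, b, hab, heq⟩ := Finite.exists_ne_map_eq_of_infinite (fun n => derivedSeries G n)
  wlog hlt : a < b generalizing a b
  · exact this b a hab.symm heq.symm (by omega)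
  have hstep : derivedSeries G (a + 1) = derivedSeries G a :=
    le_antisymm (anti a (a+1) (Nat.le_succ a))
      (by rw [heq]; exact anti (a+1) b hlt)
  have hstab : ∀ m, a ≤ m → derivedSeries G m = derivedSeries G a := by
    intro m hm
    induction m with
    | zero =>
      have : a = 0 := Nat.le_zero.mp hm
      rw [this]
    | succ m ih =>
      rcases Nat.lt_or_ge a (m+1) with h | h
      · have hm' : a ≤ m := Nat.lt_succ_iff.mp h
        rw [derivedSeries_succ, ih hm', ← derivedSeries_succ, hstep]
      · exact le_antisymm (anti a (m+1) hm) (anti (m+1) a h)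
  refine ⟨a, by rw [← derivedSeries_succ, hstep], ?_⟩
  intro k
  rcases Nat.lt_or_ge k a with h | h
  · exact anti k a h.le
  · rw [hstab k h]

theorem exists_si_above [Finite G] (N : Subgroup G) (hN : N.Normal) {a : G} (ha : a ∉ N) :
    ∃ M : Subgroup G, M.Normal ∧ N ≤ M ∧ a ∉ M ∧ QuotSubdirectlyIrreducible M := by
  haveI : Finite (Subgroup G) :=
    Finite.of_injective (fun H : Subgroup G => (H : Set G)) SetLike.coe_injective
  have hwf : WellFoundedGT (Subgroup G) := Finite.to_wellFoundedGT
  obtain ⟨M, hMs, hmax⟩ := hwf.wf.has_min {M : Subgroup G | M.Normal ∧ N ≤ M ∧ a ∉ M}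
    ⟨N, hN, le_refl N, ha⟩
  obtain ⟨hM, hNM, haM⟩ := hMs
  refine ⟨M, hM, hNM, haM, ?_⟩
  have key : ∀ X : Subgroup G, X.Normal → M < X → a ∈ X := by
    intro X hX hlt
    by_contra haX
    exact hmax X ⟨hX, hNM.trans hlt.le, haX⟩ hlt
  have hle : M ≤ sInf {X : Subgroup G | X.Normal ∧ M < X} :=
    le_sInf fun X hX => hX.2.le
  have hmem : a ∈ sInf {X : Subgroup G | X.Normal ∧ M < X} :=
    Subgroup.mem_sInf.mpr fun X hX => key X hX.1 hX.2
  exact lt_of_le_of_ne hle fun h => haM (h ▸ hmem)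

theorem commute_of_disjoint {S R : Subgroup G} (hS : S.Normal) (hR : R.Normal)
    (h : S ⊓ R = ⊥) {s r : G} (hs : s ∈ S) (hr : r ∈ R) : s * r = r * s := by
  have h1 : s * r * s⁻¹ * r⁻¹ ∈ S ⊓ R := by
    constructor
    · have : s * (r * s⁻¹ * r⁻¹) ∈ S := mul_mem hs (by simpa using hS.conj_mem s⁻¹ (inv_mem hs) r)
      simpa [mul_assoc] using this
    · have : (s * r * s⁻¹) * r⁻¹ ∈ R := mul_mem (hR.conj_mem r hr s) (inv_mem hr)
      simpa [mul_assoc] using this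
  rw [h] at h1
  have h2 : s * r * s⁻¹ * r⁻¹ = 1 := by simpa using h1
  have := congrArg (· * (r * s)) h2
  simpa [mul_assoc] using this

theorem centralizer_normal {S : Subgroup G} (hS : S.Normal) :
    (Subgroup.centralizer (S : Set G)).Normal := by
  constructor
  intro c hc g
  rw [Subgroup.mem_centralizer_iff] at hc ⊢
  intro h hh
  have hmem : g⁻¹ * h * g ∈ S := by simpa using hS.conj_mem h hh g⁻¹
  have h1 := hc (g⁻¹ * h * g) hmem
  have h2 : h * (g * c * g⁻¹) = g * ((g⁻¹ * h * g) * c) * g⁻¹ := by group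
  rw [h2, h1]; group

theorem isC8_of_subsingleton {Q : Type*} [Group Q] [Subsingleton Q] : IsC8 Q := by
  intro X hX
  have : ∀ x : Q, x ∈ ⁅(⊤ : Subgroup Q), X⁆ ↔ x ∈ X := by
    intro x
    have hx : x = 1 := Subsingleton.elim x 1
    simp [hx, one_mem]
  exact SetLike.ext fun x => this x

theorem isC8_of_mulEquiv {H K : Type*} [Group H] [Group K] (e : H ≃* K) (h : IsC8 H) :
    IsC8 K := by
  intro X hX
  have h2 := h (X.comap e.toMonoidHom) (hX.comap e.toMonoidHom)
  have h3 := congrArg (Subgroup.map e.toMonoidHom) h2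
  rwa [Subgroup.map_commutator, Subgroup.map_top_of_surjective _ e.surjective,
    Subgroup.map_comap_eq_self_of_surjective e.surjective] at h3


section Main
variable [Finite G]

theorem keyC
    (hSI : ∀ (M : Subgroup G) (hM : M.Normal), QuotSubdirectlyIrreducible M →
      QuotSolvable M hM ∨ QuotC8 M hM)
    {S : Subgroup G}
    (hmin : ∀ (M : Subgroup G) (hM : M.Normal), QuotSolvable M hM → S ≤ M)
    (Y : Subgroup G) (hY : Y.Normal) (hYS : Y ≤ S) : ⁅(⊤ : Subgroup G), Y⁆ = Y := by
  haveI := hY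
  refine le_antisymm (Subgroup.commutator_le_right _ _) ?_
  by_contra hlt
  obtain ⟨a, haY, hac⟩ := SetLike.not_le_iff_exists.mp hlt
  haveI hcn : (⁅(⊤ : Subgroup G), Y⁆).Normal := Subgroup.commutator_normal ⊤ Y
  obtain ⟨M, hM, hcM, haM, hSIq⟩ := exists_si_above ⁅(⊤ : Subgroup G), Y⁆ hcn hac
  rcases hSI M hM hSIq with hsolv | hc8
  · exact haM (hmin M hM hsolv (hYS haY))
  · haveI := hM
    haveI hsn : (Y ⊔ M).Normal := Subgroup.sup_normal Y M
    have h1 := (quotC8_iff M hM).mp hc8 (Y ⊔ M) hsn le_sup_right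
    have h2 : ⁅(⊤ : Subgroup G), Y ⊔ M⁆ ≤ M :=
      (commutator_sup_le_right ⊤ Y M hY hM inferInstance).trans
        (sup_le hcM (Subgroup.commutator_le_right _ _))
    have h3 : Y ≤ M := by
      have h4 : Y ⊔ M ≤ M := by rw [← h1]; exact sup_le h2 le_rfl
      exact le_sup_left.trans h4
    exact haM (h3 haY)

theorem quotC8_of_complement
    {S R : Subgroup G} (hS : S.Normal) (hR : R.Normal)
    (hC : ∀ Y : Subgroup G, Y.Normal → Y ≤ S → ⁅(⊤ : Subgroup G), Y⁆ = Y)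
    (hinf : S ⊓ R = ⊥) (hsup : S ⊔ R = ⊤) : QuotC8 R hR := by
  haveI := hS; haveI := hR
  rw [quotC8_iff]
  intro X hX hRX
  haveI := hX
  refine le_antisymm (sup_le (Subgroup.commutator_le_right _ _) hRX) ?_
  intro x hxX
  have hxT : x ∈ S ⊔ R := by rw [hsup]; exact Subgroup.mem_top x
  obtain ⟨s, hs, r, hr, rfl⟩ := mem_sup_of_normal hR hxT
  have hsX : s ∈ X ⊓ S := ⟨by simpa using mul_mem hxX (inv_mem (hRX hr)), hs⟩
  haveI : (X ⊓ S).Normal := Subgroup.normal_inf_normal X S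
  have h1 : s ∈ ⁅(⊤ : Subgroup G), X ⊓ S⁆ := by
    rw [hC (X ⊓ S) inferInstance inf_le_right]; exact hsX
  have h2 : s ∈ ⁅(⊤ : Subgroup G), X⁆ := commutator_mono le_rfl inf_le_left h1
  exact mul_mem ((le_sup_left : _ ≤ ⁅(⊤ : Subgroup G), X⁆ ⊔ R) h2) ((le_sup_right : R ≤ _) hr)

theorem perfect_of_pair {S R : Subgroup G} (hS : S.Normal) (hR : R.Normal)
    (hinf : S ⊓ R = ⊥) (hsup : S ⊔ R = ⊤) (hc8 : QuotC8 R hR) : ⁅S, S⁆ = S := by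
  haveI := hS; haveI := hR
  have h1 := (quotC8_iff R hR).mp hc8 ⊤ inferInstance le_top
  have h2 : ⁅(⊤ : Subgroup G), (⊤ : Subgroup G)⁆ ≤ ⁅S, S⁆ ⊔ R := by
    have ha : ⁅(⊤ : Subgroup G), (⊤ : Subgroup G)⁆ = ⁅S ⊔ R, S ⊔ R⁆ := by rw [hsup]
    rw [ha]
    haveI : (S ⊔ R).Normal := Subgroup.sup_normal S R
    have hb := commutator_sup_le_left S R (S ⊔ R) hS hR inferInstance
    have hcc := commutator_sup_le_right S S R hS hR hS
    have hc' : ⁅R, S ⊔ R⁆ ≤ R := Subgroup.commutator_le_left R (S ⊔ R)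
    have hd : ⁅S, R⁆ ≤ R := Subgroup.commutator_le_right S R
    exact hb.trans (sup_le (hcc.trans (sup_le le_sup_left (hd.trans le_sup_right)))
      (hc'.trans le_sup_right))
  have h3 : (⊤ : Subgroup G) ≤ ⁅S, S⁆ ⊔ R := by rw [← h1]; exact sup_le h2 le_sup_right
  refine le_antisymm (Subgroup.commutator_le_left S S) ?_
  intro s hs
  obtain ⟨c, hc, r, hr, heq⟩ := mem_sup_of_normal hR (h3 (Subgroup.mem_top s))
  have hcS : c ∈ S := Subgroup.commutator_le_left S S hc
  have hrval : r = c⁻¹ * s := by rw [heq]; group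
  have hrSR : r ∈ S ⊓ R := ⟨by rw [hrval]; exact S.mul_mem (S.inv_mem hcS) hs, hr⟩
  rw [hinf] at hrSR
  have : r = 1 := hrSR
  rw [heq, this, mul_one]
  exact hc

end Main


universe u

theorem exists_pair :
    ∀ (n : ℕ) (G : Type u) [Group G] [Finite G], Nat.card G ≤ n →
      (∀ (M : Subgroup G) (hM : M.Normal), QuotSubdirectlyIrreducible M →
        QuotSolvable M hM ∨ QuotC8 M hM) →
      ∃ (S R : Subgroup G) (hS : S.Normal) (hR : R.Normal),
        S ⊓ R = ⊥ ∧ S ⊔ R = ⊤ ∧ QuotSolvable S hS ∧ QuotC8 R hR := by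
  intro n
  induction n with
  | zero =>
    intro G _ _ hcard _
    exact absurd hcard (by have := Nat.card_pos (α := G); omega)
  | succ n ih =>
    intro G _ _ hcard hSI
    obtain ⟨n₀, hperf, hle⟩ := exists_stable_derived (G := G)
    set S := derivedSeries G n₀ with hSdef
    haveI hSnorm : S.Normal := derivedSeries_normal G n₀
    have hSsolv : QuotSolvable S hSnorm := (quotSolvable_iff S hSnorm).mpr ⟨n₀, le_rfl⟩
    have hSmin : ∀ (M : Subgroup G) (hM : M.Normal), QuotSolvable M hM → S ≤ M := by
      intro M hM hsolv
      obtain ⟨k, hk⟩ := (quotSolvable_iff M hM).mp hsolv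
      exact (hle k).trans hk
    have hC : ∀ Y : Subgroup G, Y.Normal → Y ≤ S → ⁅(⊤ : Subgroup G), Y⁆ = Y :=
      keyC hSI hSmin
    -- pull-back sublemma
    have key : ∀ A : Subgroup G, A.Normal → A ≠ ⊥ →
        ∃ (R : Subgroup G) (hR : R.Normal), A ≤ R ∧ S ⊓ R = S ⊓ A ∧ S ⊔ R = ⊤ ∧
          QuotC8 R hR := by
      intro A hA hAbot
      haveI := hA
      set f := QuotientGroup.mk' A with hfdef
      have hfs : Function.Surjective f := QuotientGroup.mk'_surjective A
      have hker : f.ker = A := QuotientGroup.ker_mk' A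
      have hcards : Nat.card G = Nat.card (G ⧸ A) * Nat.card A :=
        Subgroup.card_eq_card_quotient_mul_card_subgroup A
      have hA2 : 1 < Nat.card A := (Subgroup.one_lt_card_iff_ne_bot A).mpr hAbot
      have hq1 : 0 < Nat.card (G ⧸ A) := Nat.card_pos
      have hqcard : Nat.card (G ⧸ A) ≤ n := by nlinarith
      have hkerle : ∀ (Z : Subgroup (G ⧸ A)), A ≤ Subgroup.comap f Z := by
        intro Z a ha
        have h1 : f a = 1 := by rwa [← MonoidHom.mem_ker, hker]
        simpa [Subgroup.mem_comap, h1] using Z.one_mem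
      have hSIq : ∀ (Mb : Subgroup (G ⧸ A)) (hMb : Mb.Normal), QuotSubdirectlyIrreducible Mb →
          QuotSolvable Mb hMb ∨ QuotC8 Mb hMb := by
        intro Mb hMb hsi
        haveI := hMb
        set M := Subgroup.comap f Mb with hMdef
        haveI hM : M.Normal := hMb.comap f
        have hAM : A ≤ M := hkerle Mb
        have hmapM : Subgroup.map f M = Mb := Subgroup.map_comap_eq_self_of_surjective hfs Mb
        have hsiG : QuotSubdirectlyIrreducible M := by
          have hstep : ∀ X : Subgroup G, X.Normal → M < X →
              sInf {Z : Subgroup (G ⧸ A) | Z.Normal ∧ Mb < Z} ≤ Subgroup.map f X := by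
            intro X hX hMX
            refine sInf_le ⟨hX.map f hfs, ?_⟩
            have h1 : Mb ≤ Subgroup.map f X := hmapM ▸ Subgroup.map_mono hMX.le
            refine lt_of_le_of_ne h1 ?_
            intro hEq
            have h3 : Subgroup.comap f (Subgroup.map f X) = X := by
              rw [Subgroup.comap_map_eq, hker, sup_eq_left.mpr (hAM.trans hMX.le)]
            exact hMX.ne' (by rw [← h3, ← hEq])
          have h1 : Subgroup.comap f (sInf {Z : Subgroup (G ⧸ A) | Z.Normal ∧ Mb < Z}) ≤
              sInf {X : Subgroup G | X.Normal ∧ M < X} := by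
            refine le_sInf ?_
            rintro X ⟨hX, hMX⟩
            refine (Subgroup.comap_mono (hstep X hX hMX)).trans ?_
            rw [Subgroup.comap_map_eq, hker, sup_eq_left.mpr (hAM.trans hMX.le)]
          have h2 : M < Subgroup.comap f (sInf {Z : Subgroup (G ⧸ A) | Z.Normal ∧ Mb < Z}) := by
            refine lt_of_le_of_ne (Subgroup.comap_mono hsi.le) ?_
            intro hEq
            have h4 := congrArg (Subgroup.map f) hEq
            rw [hmapM, Subgroup.map_comap_eq_self_of_surjective hfs] at h4
            exact hsi.ne h4
          exact lt_of_lt_of_le h2 h1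
        haveI hmapMnorm : (Subgroup.map f M).Normal := hM.map f hfs
        have e : (G ⧸ A) ⧸ Mb ≃* G ⧸ M :=
          (QuotientGroup.quotientMulEquivOfEq hmapM.symm).trans
            (QuotientGroup.quotientQuotientEquivQuotient A M hAM)
        rcases hSI M hM hsiG with h | h
        · left
          haveI : Group.IsSolvable (G ⧸ M) := h
          exact solvable_of_surjective (f := e.symm.toMonoidHom) (by exact e.symm.surjective)
        · right
          exact isC8_of_mulEquiv e.symm h
      obtain ⟨Sb, Rb, hSb, hRb, hinfb, hsupb, hsolvb, hc8b⟩ := ih (G ⧸ A) hqcard hSIq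
      haveI := hSb; haveI := hRb
      set SA := Subgroup.comap f Sb with hSAdef
      set R := Subgroup.comap f Rb with hRdef
      haveI hSAn : SA.Normal := hSb.comap f
      haveI hRn : R.Normal := hRb.comap f
      have hAR : A ≤ R := hkerle Rb
      have hASA : A ≤ SA := hkerle Sb
      have hmapSA : Subgroup.map f SA = Sb := Subgroup.map_comap_eq_self_of_surjective hfs Sb
      have hmapR : Subgroup.map f R = Rb := Subgroup.map_comap_eq_self_of_surjective hfs Rb
      have hinf' : SA ⊓ R = A := by
        have h1 : SA ⊓ R = Subgroup.comap f (Sb ⊓ Rb) := (Subgroup.comap_inf Sb Rb f).symm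
        rw [hinfb] at h1
        rw [h1, MonoidHom.comap_bot, hker]
      have hsup' : SA ⊔ R = ⊤ := by
        have h1 := Subgroup.comap_sup_eq (f := f) Sb Rb hfs
        rw [hsupb] at h1
        rw [hSAdef, hRdef, h1, Subgroup.comap_top]
      haveI hmapSAn : (Subgroup.map f SA).Normal := hSAn.map f hfs
      haveI hmapRn : (Subgroup.map f R).Normal := hRn.map f hfs
      have eS : (G ⧸ A) ⧸ Sb ≃* G ⧸ SA :=
        (QuotientGroup.quotientMulEquivOfEq hmapSA.symm).trans
          (QuotientGroup.quotientQuotientEquivQuotient A SA hASA)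
      have eR : (G ⧸ A) ⧸ Rb ≃* G ⧸ R :=
        (QuotientGroup.quotientMulEquivOfEq hmapR.symm).trans
          (QuotientGroup.quotientQuotientEquivQuotient A R hAR)
      have hsolvSA : QuotSolvable SA hSAn := by
        haveI : Group.IsSolvable ((G ⧸ A) ⧸ Sb) := hsolvb
        show IsSolvable (G ⧸ SA)
        exact solvable_of_surjective (f := eS.toMonoidHom) (by exact eS.surjective)
      have hc8R : QuotC8 R hRn := by
        show IsC8 (G ⧸ R)
        exact isC8_of_mulEquiv eR hc8b
      have hSbperf : ⁅Sb, Sb⁆ = Sb := perfect_of_pair hSb hRb hinfb hsupb hc8b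
      have hmapS : Subgroup.map f S = Sb := by
        refine le_antisymm ?_ ?_
        · have h1 : S ≤ SA := hSmin SA hSAn hsolvSA
          exact hmapSA ▸ Subgroup.map_mono h1
        · have h2 := perfect_le_derivedSeries Sb hSbperf n₀
          rwa [← map_derivedSeries_eq hfs n₀] at h2
      have hSA_eq : SA = S ⊔ A := by
        rw [hSAdef, ← hmapS, Subgroup.comap_map_eq, hker]
      refine ⟨R, hRn, hAR, ?_, ?_, hc8R⟩
      · refine le_antisymm ?_ (le_inf inf_le_left (inf_le_right.trans hAR))
        have h1 : S ⊓ R ≤ SA ⊓ R :=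
          inf_le_inf_right R (by rw [hSA_eq]; exact le_sup_left)
        rw [hinf'] at h1
        exact le_inf inf_le_left h1
      · have h1 : (S ⊔ A) ⊔ R = ⊤ := by rw [← hSA_eq]; exact hsup'
        rw [sup_assoc, sup_eq_right.mpr hAR] at h1
        exact h1
    -- case analysis
    by_cases hStop : S = ⊤
    · refine ⟨⊤, ⊥, inferInstance, inferInstance, ?_, ?_, ?_, ?_⟩
      · simp
      · simp
      · show Group.IsSolvable (G ⧸ (⊤ : Subgroup G))
        haveI : Subsingleton (G ⧸ (⊤ : Subgroup G)) :=
          QuotientGroup.subsingleton_quotient_top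
        infer_instance
      · exact quotC8_of_complement (S := ⊤) (R := ⊥) inferInstance inferInstance
          (fun Y hY _ => hC Y hY (by rw [hStop]; exact le_top)) (by simp) (by simp)
    by_cases hex : ∃ A : Subgroup G, A.Normal ∧ A ≠ ⊥ ∧ A ⊓ S = ⊥
    · obtain ⟨A, hA, hAbot, hAS⟩ := hex
      obtain ⟨R, hR, hAR, hinf', hsup', hc8'⟩ := key A hA hAbot
      refine ⟨S, R, hSnorm, hR, ?_, hsup', hSsolv, hc8'⟩
      rw [hinf', inf_comm, hAS]
    by_cases hsi : QuotSubdirectlyIrreducible (⊥ : Subgroup G)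
    · rcases hSI ⊥ inferInstance hsi with h | h
      · refine ⟨⊥, ⊤, inferInstance, inferInstance, (by simp : (⊥ : Subgroup G) ⊓ ⊤ = ⊥), (by simp : (⊥ : Subgroup G) ⊔ ⊤ = ⊤), h, ?_⟩
        show IsC8 (G ⧸ (⊤ : Subgroup G))
        haveI : Subsingleton (G ⧸ (⊤ : Subgroup G)) :=
          QuotientGroup.subsingleton_quotient_top
        exact isC8_of_subsingleton
      · refine ⟨⊤, ⊥, inferInstance, inferInstance, by simp, by simp, ?_, h⟩
        show Group.IsSolvable (G ⧸ (⊤ : Subgroup G))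
        haveI : Subsingleton (G ⧸ (⊤ : Subgroup G)) :=
          QuotientGroup.subsingleton_quotient_top
        infer_instance
    · push_neg at hex
      have h0 : (⊥ : Subgroup G) ≠ ⊤ := by
        intro h
        exact hStop (le_antisymm le_top (by rw [← h]; exact bot_le))
      have hbt : (⊥ : Subgroup G) < ⊤ := lt_of_le_of_ne bot_le h0
      have hInfBot : sInf {X : Subgroup G | X.Normal ∧ ⊥ < X} = ⊥ := by
        by_contra h
        exact hsi (lt_of_le_of_ne (le_sInf fun X hX => bot_le) (Ne.symm h))
      haveI : Finite (Subgroup G) :=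
        Finite.of_injective (fun H : Subgroup G => (H : Set G)) SetLike.coe_injective
      have hwf : WellFoundedLT (Subgroup G) := Finite.to_wellFoundedLT
      obtain ⟨A, hAmem, hAmin⟩ := hwf.wf.has_min {X : Subgroup G | X.Normal ∧ ⊥ < X}
        ⟨⊤, inferInstance, hbt⟩
      obtain ⟨hA, hAbot⟩ := hAmem
      have hASne : A ⊓ S ≠ ⊥ := hex A hA hAbot.ne'
      have hAS : A ≤ S := by
        haveI := hA
        have h1 : (A ⊓ S) ∈ {X : Subgroup G | X.Normal ∧ ⊥ < X} :=
          ⟨inferInstance, bot_lt_iff_ne_bot.mpr hASne⟩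
        have h2 : ¬(A ⊓ S < A) := hAmin _ h1
        exact inf_eq_left.mp (eq_of_le_of_not_lt inf_le_left h2)
      have hB0 : ∃ X ∈ {X : Subgroup G | X.Normal ∧ ⊥ < X}, ¬A ≤ X := by
        by_contra h
        push_neg at h
        have h1 : A ≤ sInf {X : Subgroup G | X.Normal ∧ ⊥ < X} := le_sInf h
        rw [hInfBot] at h1
        exact hAbot.ne' (le_bot_iff.mp h1)
      obtain ⟨B0, ⟨hB0n, hB0bot⟩, hAB0⟩ := hB0
      haveI := hA; haveI := hB0n
      have hAB0inf : A ⊓ B0 = ⊥ := by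
        have h1 : A ⊓ B0 < A :=
          lt_of_le_of_ne inf_le_left fun h => hAB0 (by rw [← h]; exact inf_le_right)
        by_contra h
        exact hAmin (A ⊓ B0) ⟨inferInstance, bot_lt_iff_ne_bot.mpr h⟩ h1
      set B := B0 ⊓ S with hBdef
      haveI hBn : B.Normal := inferInstance
      have hBbot : B ≠ ⊥ := hex B0 hB0n hB0bot.ne'
      have hBS : B ≤ S := inf_le_right
      have hABinf : A ⊓ B = ⊥ :=
        le_bot_iff.mp (by
          calc A ⊓ B ≤ A ⊓ B0 := inf_le_inf_left A inf_le_left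
          _ = ⊥ := hAB0inf)
      obtain ⟨RA, hRA, hARA, hinfA, hsupA, hc8A⟩ := key A hA hAbot.ne'
      obtain ⟨RB, hRB, hBRB, hinfB, hsupB, hc8B⟩ := key B hBn hBbot
      have hSRA : S ⊓ RA = A := by rw [hinfA, inf_eq_right.mpr hAS]
      have hSRB : S ⊓ RB = B := by rw [hinfB, inf_eq_right.mpr hBS]
      haveI := hRA; haveI := hRB
      set R := RA ⊓ RB with hRdef
      haveI hRn : R.Normal := inferInstance
      have hsupR : S ⊔ R = ⊤ := by
        have hchar := (quotC8_iff RB hRB).mp hc8B (RA ⊔ RB) inferInstance le_sup_right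
        have hcle : ⁅(⊤ : Subgroup G), RA ⊔ RB⁆ ≤ A ⊔ RB := by
          refine (commutator_sup_le_right ⊤ RA RB hRA hRB inferInstance).trans
            (sup_le ?_ ?_)
          · have h1 : ⁅(⊤ : Subgroup G), RA⁆ = ⁅S ⊔ RB, RA⁆ := by rw [hsupB]
            rw [h1]
            refine (commutator_sup_le_left S RB RA hSnorm hRB hRA).trans (sup_le ?_ ?_)
            · exact (Subgroup.commutator_le_inf S RA).trans
                (by rw [hSRA]; exact le_sup_left)
            · exact (Subgroup.commutator_le_left RB RA).trans le_sup_right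
          · exact (Subgroup.commutator_le_right ⊤ RB).trans le_sup_right
        have hRAle : RA ≤ A ⊔ RB := by
          have h2 : RA ⊔ RB ≤ A ⊔ RB := by rw [← hchar]; exact sup_le hcle le_sup_right
          exact le_sup_left.trans h2
        have hRAle2 : RA ≤ A ⊔ R := by
          intro x hx
          obtain ⟨a, ha, r, hr, rfl⟩ := mem_sup_of_normal hRB (hRAle hx)
          have hrRA : r ∈ RA := by
            have h3 : a⁻¹ * (a * r) ∈ RA := mul_mem (inv_mem (hARA ha)) hx
            simpa using h3
          exact mul_mem ((le_sup_left : A ≤ A ⊔ R) ha)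
            ((le_sup_right : R ≤ A ⊔ R) ⟨hrRA, hr⟩)
        rw [eq_top_iff, ← hsupA]
        refine sup_le le_sup_left ?_
        exact hRAle2.trans (sup_le (hAS.trans le_sup_left) le_sup_right)
      have hinfR : S ⊓ R = ⊥ := by
        have h1 : S ⊓ R = (S ⊓ RA) ⊓ (S ⊓ RB) := inf_inf_distrib_left S RA RB
        rw [h1, hSRA, hSRB, hABinf]
      exact ⟨S, R, hSnorm, hRn, hinfR, hsupR, hSsolv,
        quotC8_of_complement hSnorm hRn hC hinfR hsupR⟩

theorem solvable_C8_factorization'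
    {G : Type*} [Group G] [Finite G]
    (hSI : ∀ (M : Subgroup G) (hM : M.Normal), QuotSubdirectlyIrreducible M →
      QuotSolvable M hM ∨ QuotC8 M hM) :
    (∃! p : Subgroup G × Subgroup G,
      ∃ (hS : p.1.Normal) (hR : p.2.Normal),
        p.1 ⊓ p.2 = ⊥ ∧ p.1 ⊔ p.2 = ⊤ ∧ QuotSolvable p.1 hS ∧ QuotC8 p.2 hR) ∧
    (∀ (S R : Subgroup G) (hS : S.Normal) (hR : R.Normal),
      S ⊓ R = ⊥ → S ⊔ R = ⊤ → QuotSolvable S hS → QuotC8 R hR →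
      ∀ X : Subgroup G, X.Normal → X = (X ⊔ S) ⊓ (X ⊔ R)) := by
  classical
  obtain ⟨n₀, hperf, hle⟩ := exists_stable_derived (G := G)
  set S0 := derivedSeries G n₀ with hS0def
  haveI hS0norm : S0.Normal := derivedSeries_normal G n₀
  have hSmin : ∀ (M : Subgroup G) (hM : M.Normal), QuotSolvable M hM → S0 ≤ M := by
    intro M hM hsolv
    obtain ⟨k, hk⟩ := (quotSolvable_iff M hM).mp hsolv
    exact (hle k).trans hk
  have hC : ∀ Y : Subgroup G, Y.Normal → Y ≤ S0 → ⁅(⊤ : Subgroup G), Y⁆ = Y :=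
    keyC hSI hSmin
  set C := Subgroup.centralizer (S0 : Set G) with hCdef
  haveI hCnorm : C.Normal := centralizer_normal hS0norm
  have huniq : ∀ (S R : Subgroup G) (hS : S.Normal) (hR : R.Normal),
      S ⊓ R = ⊥ → S ⊔ R = ⊤ → QuotSolvable S hS → QuotC8 R hR → S = S0 ∧ R = C := by
    intro S R hS hR hinf hsup hsolv hc8
    have hperf' : ⁅S, S⁆ = S := perfect_of_pair hS hR hinf hsup hc8
    have hSeq : S = S0 :=
      le_antisymm (perfect_le_derivedSeries S hperf' n₀) (hSmin S hS hsolv)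
    rw [hSeq] at hinf hsup
    have hRC : R ≤ C := by
      intro r hr
      rw [Subgroup.mem_centralizer_iff]
      intro s hs
      exact commute_of_disjoint hS0norm hR hinf hs hr
    have hZ : C ⊓ S0 ≤ ⊥ := by
      haveI : (C ⊓ S0).Normal := inferInstance
      have h1 : ⁅(⊤ : Subgroup G), C ⊓ S0⁆ = C ⊓ S0 := hC _ inferInstance inf_le_right
      have h2 : ⁅(⊤ : Subgroup G), C ⊓ S0⁆ ≤ ⊥ := by
        have h3 : ⁅(⊤ : Subgroup G), C ⊓ S0⁆ = ⁅S0 ⊔ R, C ⊓ S0⁆ := by rw [hsup]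
        rw [h3]
        refine (commutator_sup_le_left S0 R (C ⊓ S0) hS0norm hR inferInstance).trans
          (sup_le ?_ ?_)
        · rw [Subgroup.commutator_le]
          intro g hg z hz
          have h4 := Subgroup.mem_centralizer_iff.mp hz.1 g hg
          have h5 : ⁅g, z⁆ = 1 := commutatorElement_eq_one_iff_commute.mpr h4
          rw [h5]
          exact Subgroup.one_mem ⊥
        · calc ⁅R, C ⊓ S0⁆ ≤ R ⊓ (C ⊓ S0) := Subgroup.commutator_le_inf R (C ⊓ S0)
            _ ≤ S0 ⊓ R := le_inf (inf_le_right.trans inf_le_right) inf_le_left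
            _ = ⊥ := hinf
      rw [h1] at h2
      exact h2
    have hCR : C ≤ R := by
      intro c hcm
      have hcT : c ∈ S0 ⊔ R := by rw [hsup]; exact Subgroup.mem_top c
      obtain ⟨s, hs, r, hr, heq⟩ := mem_sup_of_normal hR hcT
      have hsC : s ∈ C := by
        have h6 : s = c * r⁻¹ := by rw [heq]; group
        rw [h6]
        exact mul_mem hcm (inv_mem (hRC hr))
      have hsbot : s ∈ (⊥ : Subgroup G) := hZ ⟨hsC, hs⟩
      have h7 : s = 1 := hsbot
      rw [heq, h7, one_mul]
      exact hr
    exact ⟨hSeq, le_antisymm hRC hCR⟩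
  obtain ⟨S1, R1, hS1, hR1, hinf1, hsup1, hsolv1, hc81⟩ :=
    exists_pair (Nat.card G) G le_rfl hSI
  constructor
  · refine ⟨(S1, R1), ⟨hS1, hR1, hinf1, hsup1, hsolv1, hc81⟩, ?_⟩
    rintro ⟨S', R'⟩ ⟨hS', hR', hinf', hsup', hsolv', hc8'⟩
    obtain ⟨he1, he2⟩ := huniq S' R' hS' hR' hinf' hsup' hsolv' hc8'
    obtain ⟨he3, he4⟩ := huniq S1 R1 hS1 hR1 hinf1 hsup1 hsolv1 hc81
    exact Prod.ext (he1.trans he3.symm) (he2.trans he4.symm)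
  · intro S R hS hR hinf hsup hsolv hc8 X hX
    obtain ⟨hSeq, _⟩ := huniq S R hS hR hinf hsup hsolv hc8
    rw [hSeq] at hinf hsup ⊢
    haveI := hX; haveI := hR
    refine le_antisymm (le_inf le_sup_left le_sup_left) ?_
    haveI hXRnorm : (X ⊔ R).Normal := inferInstance
    haveI hYnorm : ((X ⊔ R) ⊓ S0).Normal := inferInstance
    have hY1 : ⁅(⊤ : Subgroup G), (X ⊔ R) ⊓ S0⁆ = (X ⊔ R) ⊓ S0 := hC _ hYnorm inf_le_right
    have hY2 : ⁅(⊤ : Subgroup G), (X ⊔ R) ⊓ S0⁆ ≤ X := by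
      have h3 : ⁅(⊤ : Subgroup G), (X ⊔ R) ⊓ S0⁆ = ⁅S0 ⊔ R, (X ⊔ R) ⊓ S0⁆ := by rw [hsup]
      rw [h3]
      refine (commutator_sup_le_left S0 R _ hS0norm hR hYnorm).trans (sup_le ?_ ?_)
      · rw [Subgroup.commutator_le]
        intro g hg y hy
        obtain ⟨x, hx, r, hr, heq⟩ := mem_sup_of_normal hR hy.1
        have hgr : g * r = r * g := commute_of_disjoint hS0norm hR hinf hg hr
        have hcr : ⁅g, r⁆ = 1 := commutatorElement_eq_one_iff_commute.mpr hgr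
        have h5 : ⁅g, y⁆ = ⁅g, x⁆ * (x * ⁅g, r⁆ * x⁻¹) := by rw [heq]; group
        have hxmem : ⁅g, x⁆ ∈ X := mul_mem (hX.conj_mem x hx g) (inv_mem hx)
        rw [h5, hcr]
        simpa using hxmem
      · refine le_trans ?_ (bot_le : (⊥ : Subgroup G) ≤ X)
        calc ⁅R, (X ⊔ R) ⊓ S0⁆ ≤ R ⊓ ((X ⊔ R) ⊓ S0) :=
              Subgroup.commutator_le_inf R ((X ⊔ R) ⊓ S0)
          _ ≤ S0 ⊓ R := le_inf (inf_le_right.trans inf_le_right) inf_le_left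
          _ = ⊥ := hinf
    have hYX : (X ⊔ R) ⊓ S0 ≤ X := by rw [← hY1]; exact hY2
    intro z hz
    obtain ⟨hz1, hz2⟩ := hz
    obtain ⟨x, hx, r, hr, heq⟩ := mem_sup_of_normal hR hz2
    have hrmem : r ∈ X ⊔ S0 := by
      have h8 : r = x⁻¹ * z := by rw [heq]; group
      rw [h8]
      exact mul_mem (inv_mem ((le_sup_left : X ≤ X ⊔ S0) hx)) hz1
    obtain ⟨x1, hx1, s, hs, heq2⟩ := mem_sup_of_normal hS0norm hrmem
    have hsY : s ∈ (X ⊔ R) ⊓ S0 := by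
      rw [Subgroup.mem_inf]
      refine ⟨?_, hs⟩
      have h9 : s = x1⁻¹ * r := by rw [heq2]; group
      rw [h9]
      exact mul_mem (inv_mem ((le_sup_left : X ≤ X ⊔ R) hx1))
        ((le_sup_right : R ≤ X ⊔ R) hr)
    have hsX : s ∈ X := hYX hsY
    have hrX : r ∈ X := by rw [heq2]; exact mul_mem hx1 hsX
    rw [heq]
    exact mul_mem hx hrX
end C8Factorization

/-- Let `G` be a finite group in which every subdirectly irreducible quotient is solvable
or satisfies (C8). Then there is exactly one pair `(S, R)` of complementary normal subgroups
with `G/S` solvable and `G/R` a (C8)-group; moreover every normal subgroup `X` is a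
product congruence relative to this factorization: `X = (X ⊔ S) ⊓ (X ⊔ R)`. -/
theorem solvable_C8_factorization
    {G : Type*} [Group G] [Finite G]
    (hSI : ∀ (M : Subgroup G) (hM : M.Normal), QuotSubdirectlyIrreducible M →
      QuotSolvable M hM ∨ QuotC8 M hM) :
    (∃! p : Subgroup G × Subgroup G,
      ∃ (hS : p.1.Normal) (hR : p.2.Normal),
        p.1 ⊓ p.2 = ⊥ ∧ p.1 ⊔ p.2 = ⊤ ∧ QuotSolvable p.1 hS ∧ QuotC8 p.2 hR) ∧
    (∀ (S R : Subgroup G) (hS : S.Normal) (hR : R.Normal),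
      S ⊓ R = ⊥ → S ⊔ R = ⊤ → QuotSolvable S hS → QuotC8 R hR →
      ∀ X : Subgroup G, X.Normal → X = (X ⊔ S) ⊓ (X ⊔ R)) :=
  C8Factorization.solvable_C8_factorization' hSI
end

section
/- Let G be a finite group such that for every normal subgroup M of G for which the quotient G/M is subdirectly irreducible, G/M is nilpotent or G/M satisfies (C8). Then there exist normal subgroups S and R of G with S ⊓ R = ⊥, S ⊔ R = ⊤, G/S nilpotent, and G/R satisfying (C8); moreover there exists n₀ such that for every n ≥ n₀, S equals the n-th term of the lower central series of G and R equals the n-th term of the upper central series of G. -/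
/-- The quotient `G/M` is nilpotent. -/
def QuotNilpotent {G : Type*} [Group G] (M : Subgroup G) (hM : M.Normal) : Prop :=
  haveI := hM
  Group.IsNilpotent (G ⧸ M)

namespace NilC8Aux

open Subgroup QuotientGroup
open scoped commutatorElement

variable {G : Type*} [Group G]

/-- If `⁅H,K⁆ ≤ M` and `⁅H,L⁆ ≤ M` with `M` normal, then `⁅H, K ⊔ L⁆ ≤ M`. -/
lemma commutator_sup_le_right {H K L M : Subgroup G} (hM : M.Normal)
    (hK : ⁅H, K⁆ ≤ M) (hL : ⁅H, L⁆ ≤ M) : ⁅H, K ⊔ L⁆ ≤ M := by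
  let D : Subgroup G :=
    { carrier := { x | ∀ h ∈ H, ⁅h, x⁆ ∈ M }
      one_mem' := by intro h _; simpa using one_mem M
      mul_mem' := by
        intro x y hx hy h hh
        have hxy : ⁅h, x * y⁆ = ⁅h, x⁆ * (x * ⁅h, y⁆ * x⁻¹) := by
          simp only [commutatorElement_def]; group
        rw [hxy]
        exact mul_mem (hx h hh) (hM.conj_mem _ (hy h hh) x)
      inv_mem' := by
        intro x hx h hh
        have hxy : ⁅h, x⁻¹⁆ = x⁻¹ * ⁅h, x⁆⁻¹ * x⁻¹⁻¹ := by
          simp only [commutatorElement_def]; group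
        rw [hxy]
        exact hM.conj_mem _ (inv_mem (hx h hh)) x⁻¹ }
  have hKD : K ≤ D := fun k hk h hh => hK (commutator_mem_commutator hh hk)
  have hLD : L ≤ D := fun l hl h hh => hL (commutator_mem_commutator hh hl)
  exact commutator_le.mpr fun g₁ hg₁ g₂ hg₂ => (sup_le hKD hLD) hg₂ g₁ hg₁

lemma map_lcs_eq {H : Type*} [Group H] (f : G →* H) (hf : Function.Surjective f) (n : ℕ) :
    Subgroup.map f (Subgroup.lowerCentralSeries (⊤ : Subgroup G) n) = Subgroup.lowerCentralSeries (⊤ : Subgroup H) n := by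
  induction n with
  | zero => simpa using Subgroup.map_top_of_surjective f hf
  | succ n ih =>
      show Subgroup.map f ⁅Subgroup.lowerCentralSeries (⊤ : Subgroup G) n, ⊤⁆ = ⁅Subgroup.lowerCentralSeries (⊤ : Subgroup H) n, ⊤⁆
      rw [Subgroup.map_commutator, ih, Subgroup.map_top_of_surjective f hf]

lemma stab_antitone [Finite G] (f : ℕ → Subgroup G) (hf : Antitone f) :
    ∃ n₀, ∀ n ≥ n₀, f n = f n₀ := by
  obtain ⟨a, ⟨n₀, rfl⟩, hmin⟩ :=
    Set.Finite.exists_minimalFor id _ (Set.range f).toFinite ⟨f 0, Set.mem_range_self 0⟩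
  exact ⟨n₀, fun n hn => le_antisymm (hf hn) (hmin (Set.mem_range_self n) (hf hn))⟩

lemma stab_monotone [Finite G] (f : ℕ → Subgroup G) (hf : Monotone f) :
    ∃ n₀, ∀ n ≥ n₀, f n = f n₀ := by
  obtain ⟨a, ⟨n₀, rfl⟩, hmax⟩ :=
    Set.Finite.exists_maximalFor id _ (Set.range f).toFinite ⟨f 0, Set.mem_range_self 0⟩
  exact ⟨n₀, fun n hn => le_antisymm (hmax (Set.mem_range_self n) (hf hn)) (hf hn)⟩

lemma exists_max_avoiding [Finite G] (B : Subgroup G) (hB : B.Normal) (g : G) (hg : g ∉ B) :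
    ∃ M : Subgroup G, M.Normal ∧ B ≤ M ∧ g ∉ M ∧
      ∀ X : Subgroup G, X.Normal → M < X → g ∈ X := by
  obtain ⟨M, hMs, hmax⟩ :=
    Set.Finite.exists_maximalFor id _ ({M : Subgroup G | M.Normal ∧ B ≤ M ∧ g ∉ M}).toFinite
      ⟨B, hB, le_rfl, hg⟩
  refine ⟨M, hMs.1, hMs.2.1, hMs.2.2, fun X hX hMX => ?_⟩
  by_contra hgX
  exact hMX.ne (le_antisymm hMX.le (hmax (j := X) ⟨hX, hMs.2.1.trans hMX.le, hgX⟩ hMX.le))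

lemma si_of_max {M : Subgroup G} {g : G} (hgM : g ∉ M)
    (hmax : ∀ X : Subgroup G, X.Normal → M < X → g ∈ X) :
    QuotSubdirectlyIrreducible M := by
  have h1 : M ≤ sInf {X : Subgroup G | X.Normal ∧ M < X} :=
    le_sInf fun X hX => hX.2.le
  refine lt_of_le_of_ne h1 fun e => hgM ?_
  rw [e]
  exact Subgroup.mem_sInf.mpr fun X hX => hmax X hX.1 hX.2

lemma ucs_eq_bot_of_c8 {Q : Type*} [Group Q] (h : IsC8 Q) (n : ℕ) :
    Subgroup.upperCentralSeries Q n = ⊥ := by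
  have hcenter : Subgroup.center Q = ⊥ := by
    rw [← h (Subgroup.center Q) ((Subgroup.center Q).normal_of_characteristic)]
    refine le_bot_iff.mp (commutator_le.mpr fun g₁ _ g₂ hg₂ => ?_)
    have := (Subgroup.mem_center_iff.mp hg₂) g₁
    simp only [commutatorElement_def, Subgroup.mem_bot]
    rw [this]; group
  induction n with
  | zero => rfl
  | succ n ih =>
      refine le_bot_iff.mp ?_
      rw [← hcenter]
      intro x hx
      rw [Subgroup.mem_upperCentralSeries_succ_iff] at hx
      refine Subgroup.mem_center_iff.mpr fun y => ?_
      have hxy := hx y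
      rw [ih, Subgroup.mem_bot] at hxy
      have hconj : x * y * x⁻¹ = y := by
        have h' : x * y * x⁻¹ * y⁻¹ * y = 1 * y := by rw [commutatorElement_def] at hxy; rw [hxy]
        group at h' ⊢
        simpa using h'
      calc y * x = (x * y * x⁻¹) * x := by rw [hconj]
        _ = x * y := by group

lemma c8_quot_commutator_sup (N : Subgroup G) [N.Normal] (h : IsC8 (G ⧸ N))
    {A : Subgroup G} (hA : A.Normal) :
    Subgroup.map (QuotientGroup.mk' N) ⁅(⊤ : Subgroup G), A⁆
      = Subgroup.map (QuotientGroup.mk' N) A := by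
  have hAmap : (A.map (QuotientGroup.mk' N)).Normal := hA.map _ (mk'_surjective N)
  have h2 := h (A.map (QuotientGroup.mk' N)) hAmap
  rw [Subgroup.map_commutator, Subgroup.map_top_of_surjective _ (mk'_surjective N)]
  exact h2

end NilC8Aux

open Subgroup QuotientGroup NilC8Aux
open scoped commutatorElement

/-- Let `G` be a finite group in which every subdirectly irreducible quotient is nilpotent
or satisfies (C8). Then `G` has complementary normal subgroups `S` and `R` with `G/S`
nilpotent and `G/R` a (C8)-group, and eventually `S` equals the terms of the lower central
series of `G` and `R` equals the terms of the upper central series of `G`. -/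
theorem nilpotent_C8_factorization
    {G : Type*} [Group G] [Finite G]
    (hSI : ∀ (M : Subgroup G) (hM : M.Normal), QuotSubdirectlyIrreducible M →
      QuotNilpotent M hM ∨ QuotC8 M hM) :
    ∃ (S R : Subgroup G) (hS : S.Normal) (hR : R.Normal),
      S ⊓ R = ⊥ ∧ S ⊔ R = ⊤ ∧ QuotNilpotent S hS ∧ QuotC8 R hR ∧
      ∃ n₀ : ℕ, ∀ n ≥ n₀,
        S = Subgroup.lowerCentralSeries (⊤ : Subgroup G) n ∧ R = Subgroup.upperCentralSeries G n := by
  classical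
  obtain ⟨n₁, hn₁⟩ := stab_antitone (Subgroup.lowerCentralSeries (⊤ : Subgroup G)) (Subgroup.lowerCentralSeries_antitone ⊤)
  obtain ⟨n₂, hn₂⟩ := stab_monotone (Subgroup.upperCentralSeries G) (Subgroup.upperCentralSeries_mono (G := G))
  set n₀ := max n₁ n₂ with hn₀def
  set S := Subgroup.lowerCentralSeries (⊤ : Subgroup G) n₀ with hSdef
  set R := Subgroup.upperCentralSeries G n₀ with hRdef
  have hSeq : ∀ n ≥ n₀, Subgroup.lowerCentralSeries (⊤ : Subgroup G) n = S := fun n hn => by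
    rw [hSdef, hn₁ n (le_trans (le_max_left _ _) hn), hn₁ n₀ (le_max_left _ _)]
  have hReq : ∀ n ≥ n₀, Subgroup.upperCentralSeries G n = R := fun n hn => by
    rw [hRdef, hn₂ n (le_trans (le_max_right _ _) hn), hn₂ n₀ (le_max_right _ _)]
  have hS : S.Normal := Subgroup.lowerCentralSeries_normal ⊤ n₀
  have hR : R.Normal := inferInstance
  have hR1 : ∀ x : G, (∀ y : G, x * y * x⁻¹ * y⁻¹ ∈ R) → x ∈ R := by
    intro x hx
    have hx' : x ∈ Subgroup.upperCentralSeries G (n₀ + 1) :=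
      Subgroup.mem_upperCentralSeries_succ_iff.mpr fun y => hx y
    rwa [hReq (n₀ + 1) (Nat.le_succ n₀)] at hx'
  -- The key lemma: there is no nontrivial `G`-central section above `R`.
  have key : ∀ A B : Subgroup G, A.Normal → B.Normal → R ≤ B → B ≤ A →
      ⁅(⊤ : Subgroup G), A⁆ ≤ B → A ≤ B := by
    by_contra hcon
    push_neg at hcon
    obtain ⟨A₀, B₀, hA₀, hB₀, hRB₀, hB₀A₀, hcomm₀, hAB₀⟩ := hcon
    set s : Set (Subgroup G) :=
      {B | B.Normal ∧ R ≤ B ∧ ∃ A : Subgroup G,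
        A.Normal ∧ B ≤ A ∧ ⁅(⊤ : Subgroup G), A⁆ ≤ B ∧ ¬A ≤ B} with hsdef
    have hne : s.Nonempty := ⟨B₀, hB₀, hRB₀, A₀, hA₀, hB₀A₀, hcomm₀, hAB₀⟩
    obtain ⟨B, hBs, hminB⟩ := Set.Finite.exists_minimalFor id s s.toFinite hne
    obtain ⟨hBnorm, hRB, A, hAnorm, hBA, hcomm, hAB⟩ := hBs
    haveI := hAnorm; haveI := hBnorm
    rcases eq_or_lt_of_le hRB with hRBeq | hRBlt
    · -- `B = R`: contradicts stability of the upper central series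
      refine hAB fun a ha => ?_
      rw [← hRBeq]
      refine hR1 a fun y => ?_
      have h1 : ⁅a, y⁆ ∈ ⁅A, (⊤ : Subgroup G)⁆ :=
        commutator_mem_commutator ha (mem_top y)
      rw [Subgroup.commutator_comm] at h1
      have h2 := hcomm h1
      rw [hRBeq]
      simpa [commutatorElement_def] using h2
    · -- `R < B`: pick `b ∈ B \ R` and a maximal normal `N ⊇ R` avoiding `b`
      obtain ⟨b, hbB, hbR⟩ := SetLike.exists_of_lt hRBlt
      obtain ⟨N, hNnorm, hRN, hbN, hNmax⟩ := exists_max_avoiding R hR b hbR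
      haveI := hNnorm
      rcases hSI N hNnorm (si_of_max hbN hNmax) with hqn | hqc
      · -- `G/N` nilpotent
        have hnil : Group.IsNilpotent (G ⧸ N) := hqn
        obtain ⟨k, hk⟩ := hnil.nilpotent'
        set D : ℕ → Subgroup G := fun i =>
          B ⊓ Subgroup.comap (QuotientGroup.mk' N) (Subgroup.upperCentralSeries (G ⧸ N) i) with hDdef
        have hNle : ∀ i, N ≤ Subgroup.comap (QuotientGroup.mk' N) (Subgroup.upperCentralSeries (G ⧸ N) i) := by
          intro i n hn
          rw [Subgroup.mem_comap]
          have h1 : (QuotientGroup.mk' N) n = 1 := by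
            rw [← MonoidHom.mem_ker, QuotientGroup.ker_mk']; exact hn
          rw [h1]; exact one_mem _
        have hDnorm : ∀ i, (D i).Normal := fun i => by
          rw [hDdef]; infer_instance
        have hDmono : Monotone D := fun i j hij => by
          simp only [hDdef]
          exact inf_le_inf_left _ (Subgroup.comap_mono (Subgroup.upperCentralSeries_mono _ hij))
        have hDtop : D k = B := by
          simp only [hDdef]
          rw [hk, Subgroup.comap_top, inf_top_eq]
        have hD0 : D 0 = B ⊓ N := by
          simp only [hDdef]
          rw [show Subgroup.upperCentralSeries (G ⧸ N) 0 = ⊥ from rfl, MonoidHom.comap_bot,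
            QuotientGroup.ker_mk']
        have hstep : ∀ i : ℕ, ∀ x ∈ D (i + 1), ∀ g : G, g * x * g⁻¹ * x⁻¹ ∈ D i := by
          intro i x hx g
          simp only [hDdef] at hx ⊢
          rw [Subgroup.mem_inf] at hx ⊢
          obtain ⟨hxB, hxC⟩ := hx
          refine ⟨?_, ?_⟩
          · 
            have : (g * x * g⁻¹) * x⁻¹ ∈ B := mul_mem (hBnorm.conj_mem x hxB g) (inv_mem hxB)
            simpa [mul_assoc] using this
          · have hx2 := hxC
            rw [Subgroup.mem_comap, Subgroup.mem_upperCentralSeries_succ_iff] at hx2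
            have h1 := hx2 ((QuotientGroup.mk' N) g)
            rw [Subgroup.mem_comap]
            have h4 : (QuotientGroup.mk' N) (g * x * g⁻¹ * x⁻¹) =
                ((QuotientGroup.mk' N) x * (QuotientGroup.mk' N) g *
                  ((QuotientGroup.mk' N) x)⁻¹ * ((QuotientGroup.mk' N) g)⁻¹)⁻¹ := by
              simp only [map_mul, map_inv]; group
            rw [h4]
            exact inv_mem h1
        have hex : ∃ i, ¬D (i + 1) ≤ D i := by
          by_contra hall
          push_neg at hall
          have hchain : ∀ i, D i ≤ D 0 := by
            intro i
            induction i with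
            | zero => exact le_rfl
            | succ i ih => exact (hall i).trans ih
          have hbD0 : b ∈ D 0 := hchain k (hDtop ▸ hbB)
          rw [hD0] at hbD0
          exact hbN hbD0.2
        set i := Nat.find hex with hidef
        have hPi : ¬D (i + 1) ≤ D i := Nat.find_spec hex
        have hmin' : ∀ j, j < i → D (j + 1) ≤ D j := fun j hj =>
          not_not.mp (Nat.find_min hex hj)
        have hchain0 : D i ≤ D 0 := by
          have haux : ∀ j, j ≤ i → D j ≤ D 0 := by
            intro j hj
            induction j with
            | zero => exact le_rfl
            | succ j ih =>
                exact (hmin' j (Nat.lt_of_succ_le hj)).trans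
                  (ih (Nat.le_of_lt (Nat.lt_of_succ_le hj)))
          exact haux i le_rfl
        have hmem : D i ∈ s := by
          refine ⟨hDnorm i, ?_, D (i + 1), hDnorm (i + 1), hDmono (Nat.le_succ i), ?_, hPi⟩
          · simp only [hDdef]
            exact le_inf hRB (le_trans hRN (hNle i))
          · refine Subgroup.commutator_le.mpr fun g _ t ht => ?_
            show g * t * g⁻¹ * t⁻¹ ∈ D i
            exact hstep i t ht g
        have heq : B = D i := le_antisymm (hminB hmem (show D i ≤ B from inf_le_left)) (by simp only [hDdef]; exact inf_le_left)
        have hbDi : b ∈ D i := heq ▸ hbB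
        have := hchain0 hbDi
        rw [hD0] at this
        exact hbN this.2
      · -- `G/N` satisfies (C8)
        have hc8 : IsC8 (G ⧸ N) := hqc
        have hmapAB : Subgroup.map (QuotientGroup.mk' N) A ≤
            Subgroup.map (QuotientGroup.mk' N) B := by
          rw [← c8_quot_commutator_sup N hc8 hAnorm]
          exact Subgroup.map_mono hcomm
        by_cases hAN : A ⊓ N ≤ B
        · refine hAB fun a ha => ?_
          have h1 : (QuotientGroup.mk' N) a ∈ Subgroup.map (QuotientGroup.mk' N) B :=
            hmapAB (Subgroup.mem_map_of_mem _ ha)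
          obtain ⟨b', hb'B, hb'⟩ := h1
          have hker : b'⁻¹ * a ∈ N := by
            rw [← QuotientGroup.ker_mk' N, MonoidHom.mem_ker, map_mul, map_inv, hb']
            group
          have hmem2 : b'⁻¹ * a ∈ A ⊓ N := Subgroup.mem_inf.mpr ⟨mul_mem (inv_mem (hBA hb'B)) ha, hker⟩
          have h2 := mul_mem hb'B (hAN hmem2)
          simpa using h2
        · have hsub1 : ⁅(⊤ : Subgroup G), A ⊓ N⁆ ≤ B ⊓ N :=
            le_inf ((Subgroup.commutator_mono le_rfl inf_le_left).trans hcomm)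
              ((Subgroup.commutator_mono le_rfl inf_le_right).trans
                (Subgroup.commutator_le_right _ _))
          have hsub2 : ⁅(⊤ : Subgroup G), B ⊓ N⁆ ≤ B ⊓ N :=
            Subgroup.commutator_le_right _ _
          have hcomb : ⁅(⊤ : Subgroup G), (A ⊓ N) ⊔ (B ⊓ N)⁆ ≤ B ⊓ N :=
            commutator_sup_le_right (by infer_instance) hsub1 hsub2
          have hmem : B ⊓ N ∈ s := by
            refine ⟨by infer_instance, le_inf hRB hRN, (A ⊓ N) ⊔ (B ⊓ N),
              by infer_instance, le_sup_right, hcomb, fun hle => hAN ?_⟩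
            exact (le_sup_left.trans hle).trans inf_le_left
          have heq : B = B ⊓ N := le_antisymm (hminB hmem inf_le_left) inf_le_left
          have : b ∈ B ⊓ N := heq ▸ hbB
          exact hbN this.2
  -- `G/R` satisfies (C8)
  haveI := hR
  have hQuotC8R : QuotC8 R hR := by
    intro Xbar hXbar
    haveI := hXbar
    set X := Subgroup.comap (QuotientGroup.mk' R) Xbar with hXdef
    have hXnorm : X.Normal := by rw [hXdef]; infer_instance
    haveI := hXnorm
    have hRX : R ≤ X := by
      intro r hr
      rw [hXdef, Subgroup.mem_comap]
      have h1 : (QuotientGroup.mk' R) r = 1 := by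
        rw [← MonoidHom.mem_ker, QuotientGroup.ker_mk']; exact hr
      rw [h1]; exact one_mem _
    have hBnorm' : (⁅(⊤ : Subgroup G), X⁆ ⊔ R).Normal := by infer_instance
    have hle : X ≤ ⁅(⊤ : Subgroup G), X⁆ ⊔ R :=
      key X _ hXnorm hBnorm' le_sup_right
        (sup_le (Subgroup.commutator_le_right _ _) hRX) le_sup_left
    have heq : ⁅(⊤ : Subgroup G), X⁆ ⊔ R = X :=
      le_antisymm (sup_le (Subgroup.commutator_le_right _ _) hRX) hle
    have hmapX : Subgroup.map (QuotientGroup.mk' R) X = Xbar :=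
      Subgroup.map_comap_eq_self_of_surjective (QuotientGroup.mk'_surjective R) Xbar
    have hmapR : Subgroup.map (QuotientGroup.mk' R) R = ⊥ := by
      rw [Subgroup.map_eq_bot_iff, QuotientGroup.ker_mk']
    have hfinal : Subgroup.map (QuotientGroup.mk' R) ⁅(⊤ : Subgroup G), X⁆ = Xbar := by
      have h3 : Subgroup.map (QuotientGroup.mk' R) ⁅(⊤ : Subgroup G), X⁆ ⊔
          Subgroup.map (QuotientGroup.mk' R) R = Xbar := by
        rw [← Subgroup.map_sup, heq, hmapX]
      rwa [hmapR, sup_bot_eq] at h3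
    calc ⁅(⊤ : Subgroup (G ⧸ R)), Xbar⁆
        = ⁅Subgroup.map (QuotientGroup.mk' R) ⊤, Subgroup.map (QuotientGroup.mk' R) X⁆ := by
          rw [Subgroup.map_top_of_surjective _ (QuotientGroup.mk'_surjective R), hmapX]
      _ = Subgroup.map (QuotientGroup.mk' R) ⁅(⊤ : Subgroup G), X⁆ :=
          (Subgroup.map_commutator _ _ _).symm
      _ = Xbar := hfinal
  -- the lower central series of `G/R` is constantly `⊤`
  have hlcsQ : ∀ n : ℕ, Subgroup.lowerCentralSeries (⊤ : Subgroup (G ⧸ R)) n = ⊤ := by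
    intro n
    induction n with
    | zero => rfl
    | succ n ih =>
        have h1 : ⁅(⊤ : Subgroup (G ⧸ R)), (⊤ : Subgroup (G ⧸ R))⁆ = ⊤ :=
          hQuotC8R ⊤ (by infer_instance)
        show ⁅Subgroup.lowerCentralSeries (⊤ : Subgroup (G ⧸ R)) n, ⊤⁆ = ⊤
        rw [ih, Subgroup.commutator_comm]
        exact h1
  have hJoin : S ⊔ R = ⊤ := by
    have h1 : Subgroup.map (QuotientGroup.mk' R) S = ⊤ := by
      rw [hSdef, map_lcs_eq _ (QuotientGroup.mk'_surjective R) n₀, hlcsQ n₀]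
    have h2 := congrArg (Subgroup.comap (QuotientGroup.mk' R)) h1
    rwa [Subgroup.comap_map_eq, QuotientGroup.ker_mk', Subgroup.comap_top] at h2
  have hMeet : S ⊓ R = ⊥ := by
    rw [eq_bot_iff]
    intro g hg
    by_contra hgne
    have hgbot : g ∉ (⊥ : Subgroup G) := hgne
    obtain ⟨M, hMnorm, _, hgM, hMmax⟩ := exists_max_avoiding ⊥ (by infer_instance) g hgbot
    haveI := hMnorm
    rcases hSI M hMnorm (si_of_max hgM hMmax) with hqn | hqc
    · have hnil : Group.IsNilpotent (G ⧸ M) := hqn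
      obtain ⟨c, hc⟩ := Subgroup.nilpotent_iff_lowerCentralSeries.mp hnil
      have hSM : S ≤ M := by
        have h1 : Subgroup.lowerCentralSeries (⊤ : Subgroup G) (max n₀ c) = S := hSeq _ (le_max_left _ _)
        have h2 : Subgroup.map (QuotientGroup.mk' M) (Subgroup.lowerCentralSeries (⊤ : Subgroup G) (max n₀ c)) ≤
            Subgroup.lowerCentralSeries (⊤ : Subgroup (G ⧸ M)) (max n₀ c) := Subgroup.lowerCentralSeries.map _ _
        have h3 : Subgroup.lowerCentralSeries (⊤ : Subgroup (G ⧸ M)) (max n₀ c) ≤ Subgroup.lowerCentralSeries (⊤ : Subgroup (G ⧸ M)) c :=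
          Subgroup.lowerCentralSeries_antitone ⊤ (le_max_right _ _)
        have h4 : Subgroup.map (QuotientGroup.mk' M) S ≤ ⊥ := by
          rw [← hc, ← h1]
          exact h2.trans h3
        have h5 : S ≤ MonoidHom.ker (QuotientGroup.mk' M) :=
          (Subgroup.map_eq_bot_iff _).mp (le_bot_iff.mp h4)
        rwa [QuotientGroup.ker_mk'] at h5
      exact hgM (hSM (Subgroup.mem_inf.mp hg).1)
    · have hc8 : IsC8 (G ⧸ M) := hqc
      have hRM : R ≤ M := by
        have h2 : Subgroup.map (QuotientGroup.mk' M) (Subgroup.upperCentralSeries G n₀) ≤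
            Subgroup.upperCentralSeries (G ⧸ M) n₀ :=
          Subgroup.upperCentralSeries.map (QuotientGroup.mk'_surjective M) n₀
        rw [ucs_eq_bot_of_c8 hc8 n₀] at h2
        have h5 : Subgroup.upperCentralSeries G n₀ ≤ MonoidHom.ker (QuotientGroup.mk' M) :=
          (Subgroup.map_eq_bot_iff _).mp (le_bot_iff.mp h2)
        rw [QuotientGroup.ker_mk'] at h5
        rw [hRdef]
        exact h5
      exact hgM (hRM (Subgroup.mem_inf.mp hg).2)
  haveI := hS
  have hQuotNilS : QuotNilpotent S hS := by
    refine Subgroup.nilpotent_iff_lowerCentralSeries.mpr ⟨n₀, ?_⟩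
    rw [← map_lcs_eq (QuotientGroup.mk' S) (QuotientGroup.mk'_surjective S) n₀,
      Subgroup.map_eq_bot_iff, QuotientGroup.ker_mk']
  exact ⟨S, R, hS, hR, hMeet, hJoin, hQuotNilS, hQuotC8R, n₀,
    fun n hn => ⟨(hSeq n hn).symm, (hReq n hn).symm⟩⟩
end

section
/- Let G be a finite group such that for every normal subgroup M of G for which the quotient G/M is subdirectly irreducible, G/M is abelian or G/M satisfies (C8). Then the commutator subgroup ⁅G, G⁆ and the center Z(G) satisfy ⁅G, G⁆ ⊓ Z(G) = ⊥ and ⁅G, G⁆ ⊔ Z(G) = ⊤; moreover G/⁅G, G⁆ is abelian and G/Z(G) satisfies (C8). -/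
open scoped commutatorElement


/-- The quotient `G/M` is abelian. -/
def QuotAbelian {G : Type*} [Group G] (M : Subgroup G) (hM : M.Normal) : Prop :=
  haveI := hM
  ∀ x y : G ⧸ M, x * y = y * x

def HypSI (G : Type*) [Group G] : Prop :=
  ∀ (M : Subgroup G) (hM : M.Normal), QuotSubdirectlyIrreducible M →
      QuotAbelian M hM ∨ QuotC8 M hM

section Aux
open Subgroup QuotientGroup

lemma isC8_center_eq_bot {Q : Type*} [Group Q] (h : IsC8 Q) :
    Subgroup.center Q = ⊥ := by
  have h1 := h (Subgroup.center Q) inferInstance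
  refine le_antisymm ?_ bot_le
  conv_lhs => rw [← h1]
  refine Subgroup.commutator_le.mpr fun g _ z hz => ?_
  exact Subgroup.mem_bot.mpr (commutatorElement_eq_one_iff_commute.mpr
    (Subgroup.mem_center_iff.mp hz g))

lemma isC8_commutator_eq_top {Q : Type*} [Group Q] (h : IsC8 Q) :
    commutator Q = ⊤ := by
  have := h ⊤ inferInstance
  rw [commutator_def]; exact this

lemma isC8_of_mulEquiv {Q Q' : Type*} [Group Q] [Group Q'] (e : Q ≃* Q')
    (h : IsC8 Q) : IsC8 Q' := by
  intro X hX
  have hc : (X.comap e.toMonoidHom).Normal := hX.comap _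
  have h2 := h _ hc
  have h3 := congrArg (Subgroup.map e.toMonoidHom) h2
  rwa [Subgroup.map_commutator, Subgroup.map_top_of_surjective _ e.surjective,
    Subgroup.map_comap_eq_self_of_surjective e.surjective] at h3

-- commutator with normal subgroup lands in it
lemma commutator_le_right' {G : Type*} [Group G] {Y : Subgroup G} (hY : Y.Normal) :
    ⁅(⊤ : Subgroup G), Y⁆ ≤ Y := by
  refine Subgroup.commutator_le.mpr fun g _ y hy => ?_
  have : g * y * g⁻¹ ∈ Y := hY.conj_mem y hy g
  simpa [commutatorElement_def] using Subgroup.mul_mem _ this (Subgroup.inv_mem _ hy)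
end Aux

section Aux2
open Subgroup QuotientGroup
variable {G : Type*} [Group G]

lemma quotAbelian_commutator_le {M : Subgroup G} (hM : M.Normal)
    (h : QuotAbelian M hM) : commutator G ≤ M := by
  haveI := hM
  rw [commutator_def]
  refine Subgroup.commutator_le.mpr fun g1 _ g2 _ => ?_
  have := h (QuotientGroup.mk g1) (QuotientGroup.mk g2)
  have hc : ⁅(QuotientGroup.mk g1 : G ⧸ M), (QuotientGroup.mk g2 : G ⧸ M)⁆ = 1 :=
    commutatorElement_eq_one_iff_commute.mpr this
  have hc' : (QuotientGroup.mk' M) ⁅g1, g2⁆ = 1 := by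
    rw [map_commutatorElement]; exact hc
  exact (QuotientGroup.eq_one_iff _).mp hc'

lemma quotC8_center_le {M : Subgroup G} (hM : M.Normal)
    (h : QuotC8 M hM) : Subgroup.center G ≤ M := by
  haveI := hM
  intro z hz
  have hcent : (QuotientGroup.mk z : G ⧸ M) ∈ Subgroup.center (G ⧸ M) := by
    rw [Subgroup.mem_center_iff]
    intro q
    induction q using QuotientGroup.induction_on with
    | H g =>
      have : g * z = z * g := Subgroup.mem_center_iff.mp hz g
      rw [← QuotientGroup.mk_mul, ← QuotientGroup.mk_mul, this]
  rw [isC8_center_eq_bot h, Subgroup.mem_bot] at hcent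
  exact (QuotientGroup.eq_one_iff z).mp hcent

lemma exists_si_kernel [Finite G] (K : Subgroup G) (hK : K.Normal) (y : G)
    (hy : y ∉ K) : ∃ M : Subgroup G, M.Normal ∧ K ≤ M ∧ y ∉ M ∧
      QuotSubdirectlyIrreducible M := by
  classical
  set S : Set (Subgroup G) := {M | M.Normal ∧ K ≤ M ∧ y ∉ M} with hS
  have hfin : S.Finite := Set.toFinite S
  have hne : S.Nonempty := ⟨K, hK, le_rfl, hy⟩
  obtain ⟨M, hMS, hmax⟩ := Set.Finite.exists_maximalFor id S hfin hne
  obtain ⟨hMn, hKM, hyM⟩ := hMS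
  refine ⟨M, hMn, hKM, hyM, ?_⟩
  have hyInf : y ∈ sInf {X : Subgroup G | X.Normal ∧ M < X} := by
    rw [Subgroup.mem_sInf]
    rintro X ⟨hXn, hMX⟩
    by_contra hyX
    have hXS : X ∈ S := ⟨hXn, hKM.trans hMX.le, hyX⟩
    exact hMX.ne (le_antisymm hMX.le (hmax hXS hMX.le))
  have hle : M ≤ sInf {X : Subgroup G | X.Normal ∧ M < X} :=
    le_sInf fun X hX => hX.2.le
  exact lt_of_le_of_ne hle (fun h => hyM (h ▸ hyInf))

/-- key lemma (★): normal subgroups inside the commutator subgroup are "perfect under G". -/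
lemma star_lemma [Finite G] (hyp : HypSI G) (Y : Subgroup G) (hY : Y.Normal)
    (hYD : Y ≤ commutator G) : ⁅(⊤ : Subgroup G), Y⁆ = Y := by
  haveI := hY
  have hle : ⁅(⊤ : Subgroup G), Y⁆ ≤ Y := commutator_le_right' hY
  by_contra hne
  obtain ⟨y, hyY, hyK⟩ := SetLike.exists_of_lt (hle.lt_of_ne hne)
  have hKn : (⁅(⊤ : Subgroup G), Y⁆).Normal := inferInstance
  obtain ⟨M, hMn, hKM, hyM, hMSI⟩ := exists_si_kernel _ hKn y hyK
  rcases hyp M hMn hMSI with hab | hc8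
  · exact hyM (quotAbelian_commutator_le hMn hab (hYD hyY))
  · haveI := hMn
    have hcent : (QuotientGroup.mk y : G ⧸ M) ∈ Subgroup.center (G ⧸ M) := by
      rw [Subgroup.mem_center_iff]
      intro q
      induction q using QuotientGroup.induction_on with
      | H g =>
        have hmem : ⁅g, y⁆ ∈ M := hKM (Subgroup.commutator_mem_commutator
          (Subgroup.mem_top g) hyY)
        have h1 : (QuotientGroup.mk' M) ⁅g, y⁆ = 1 := (QuotientGroup.eq_one_iff _).mpr hmem
        rw [map_commutatorElement] at h1
        exact commutatorElement_eq_one_iff_commute.mp h1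
    rw [isC8_center_eq_bot hc8, Subgroup.mem_bot] at hcent
    exact hyM ((QuotientGroup.eq_one_iff y).mp hcent)
end Aux2

section Transfer
open Subgroup QuotientGroup
variable {G : Type*} [Group G]

lemma hypSI_quotient (hyp : HypSI G) (N : Subgroup G) [hN : N.Normal] :
    HypSI (G ⧸ N) := by
  intro Mbar hMbar hSIbar
  haveI := hMbar
  set π := QuotientGroup.mk' N with hπdef
  have hπ : Function.Surjective π := QuotientGroup.mk'_surjective N
  set M : Subgroup G := Mbar.comap π with hMdef
  haveI hMn : M.Normal := hMbar.comap π
  have hNM : N ≤ M := by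
    intro n hn
    show π n ∈ Mbar
    have h1 : π n = 1 := (QuotientGroup.eq_one_iff n).mpr hn
    rw [h1]; exact Mbar.one_mem
  have hmap : M.map π = Mbar := Subgroup.map_comap_eq_self_of_surjective hπ Mbar
  have hSIbar' : Mbar < sInf {X : Subgroup (G ⧸ N) | X.Normal ∧ Mbar < X} := hSIbar
  have hSIM : QuotSubdirectlyIrreducible M := by
    show M < sInf {X : Subgroup G | X.Normal ∧ M < X}
    have hcomap_lt : M < (sInf {X : Subgroup (G ⧸ N) | X.Normal ∧ Mbar < X}).comap π := by
      refine lt_of_le_of_ne (Subgroup.comap_mono hSIbar'.le) ?_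
      intro heq
      have h2 := congrArg (Subgroup.map π) heq
      rw [hmap, Subgroup.map_comap_eq_self_of_surjective hπ] at h2
      exact hSIbar'.ne h2
    refine lt_of_lt_of_le hcomap_lt (le_sInf ?_)
    rintro X ⟨hXn, hMX⟩
    have hcomap_map : (X.map π).comap π = X := by
      rw [Subgroup.comap_map_eq, QuotientGroup.ker_mk']
      exact sup_of_le_left (hNM.trans hMX.le)
    have h1 : Mbar < X.map π := by
      refine lt_of_le_of_ne ?_ ?_
      · rw [← hmap]; exact Subgroup.map_mono hMX.le
      · intro heq
        have h2 := congrArg (Subgroup.comap π) heq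
        rw [hcomap_map] at h2
        rw [← hMdef] at h2
        exact hMX.ne h2
    have h3 : sInf {Y : Subgroup (G ⧸ N) | Y.Normal ∧ Mbar < Y} ≤ X.map π :=
      sInf_le ⟨hXn.map π hπ, h1⟩
    calc (sInf {Y : Subgroup (G ⧸ N) | Y.Normal ∧ Mbar < Y}).comap π
        ≤ (X.map π).comap π := Subgroup.comap_mono h3
      _ = X := hcomap_map
  haveI : (M.map π).Normal := hMn.map π hπ
  have e : ((G ⧸ N) ⧸ Mbar) ≃* (G ⧸ M) :=
    (QuotientGroup.quotientMulEquivOfEq hmap.symm).trans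
      (QuotientGroup.quotientQuotientEquivQuotient N M hNM)
  rcases hyp M hMn hSIM with hab | hc8
  · left
    intro x y
    apply e.injective
    rw [map_mul, map_mul, hab (e x) (e y)]
  · right
    exact isC8_of_mulEquiv e.symm hc8
end Transfer

section L4
open Subgroup QuotientGroup

lemma quot_center_c8 {Q : Type*} [Group Q] [Finite Q] (hyp : HypSI Q)
    (hsup : commutator Q ⊔ Subgroup.center Q = ⊤) :
    IsC8 (Q ⧸ Subgroup.center Q) := by
  intro Xbar hXbar
  set ρ := QuotientGroup.mk' (Subgroup.center Q) with hρdef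
  have hρ : Function.Surjective ρ := QuotientGroup.mk'_surjective _
  set X := Xbar.comap ρ with hXdef
  haveI hXn : X.Normal := hXbar.comap ρ
  have hZX : Subgroup.center Q ≤ X := by
    intro z hz
    show ρ z ∈ Xbar
    have h1 : ρ z = 1 := (QuotientGroup.eq_one_iff z).mpr hz
    rw [h1]; exact Xbar.one_mem
  set Y := X ⊓ commutator Q with hYdef
  haveI hYn : Y.Normal := by rw [hYdef]; infer_instance
  have hstar : ⁅(⊤ : Subgroup Q), Y⁆ = Y := star_lemma hyp Y hYn inf_le_right
  have hXdecomp : X = Y ⊔ Subgroup.center Q := by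
    refine le_antisymm ?_ (sup_le inf_le_left hZX)
    intro x hx
    have hxtop : x ∈ ((commutator Q ⊔ Subgroup.center Q : Subgroup Q) : Set Q) := by
      rw [hsup]; trivial
    rw [Subgroup.mul_normal] at hxtop
    obtain ⟨d, hd, z, hz, hdz⟩ := hxtop
    have hdX : d ∈ X := by
      have h2 : x * z⁻¹ ∈ X := X.mul_mem hx (X.inv_mem (hZX hz))
      rw [← hdz] at h2; simpa using h2
    have : d * z ∈ Y ⊔ Subgroup.center Q :=
      Subgroup.mul_mem _ (Subgroup.mem_sup_left (Subgroup.mem_inf.mpr ⟨hdX, hd⟩))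
        (Subgroup.mem_sup_right hz)
    have hdz2 : d * z = x := hdz
    rwa [hdz2] at this
  have hmapZ : (Subgroup.center Q).map ρ = ⊥ := by
    refine le_antisymm ?_ bot_le
    rintro _ ⟨z, hz, rfl⟩
    rw [Subgroup.mem_bot]
    exact (QuotientGroup.eq_one_iff z).mpr hz
  have hmapY : Y.map ρ = Xbar := by
    have h1 : X.map ρ = Xbar := Subgroup.map_comap_eq_self_of_surjective hρ Xbar
    rw [hXdecomp, Subgroup.map_sup, hmapZ, sup_bot_eq] at h1
    exact h1
  calc ⁅(⊤ : Subgroup (Q ⧸ Subgroup.center Q)), Xbar⁆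
      = ⁅Subgroup.map ρ ⊤, Subgroup.map ρ Y⁆ := by
        rw [Subgroup.map_top_of_surjective _ hρ, hmapY]
    _ = Subgroup.map ρ ⁅⊤, Y⁆ := (Subgroup.map_commutator _ _ _).symm
    _ = Xbar := by rw [hstar, hmapY]
end L4

section Helpers
open Subgroup QuotientGroup
variable {G : Type*} [Group G]

lemma mem_comap_center_iff (N : Subgroup G) [N.Normal] (w : G) :
    w ∈ (Subgroup.center (G ⧸ N)).comap (QuotientGroup.mk' N) ↔
      ∀ g : G, ⁅g, w⁆ ∈ N := by
  constructor
  · intro hw g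
    have hc := Subgroup.mem_center_iff.mp (Subgroup.mem_comap.mp hw)
      ((QuotientGroup.mk' N) g)
    have h1 : ⁅(QuotientGroup.mk' N) g, (QuotientGroup.mk' N) w⁆ = 1 :=
      commutatorElement_eq_one_iff_commute.mpr hc
    rw [← map_commutatorElement] at h1
    exact (QuotientGroup.eq_one_iff _).mp h1
  · intro h
    rw [Subgroup.mem_comap, Subgroup.mem_center_iff]
    intro q
    induction q using QuotientGroup.induction_on with
    | H g =>
      have h1 : (QuotientGroup.mk' N) ⁅g, w⁆ = 1 :=
        (QuotientGroup.eq_one_iff _).mpr (h g)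
      rw [map_commutatorElement] at h1
      exact commutatorElement_eq_one_iff_commute.mp h1

lemma le_comap_center (N : Subgroup G) [hN : N.Normal] :
    N ≤ (Subgroup.center (G ⧸ N)).comap (QuotientGroup.mk' N) := by
  intro n hn
  rw [mem_comap_center_iff]
  intro g
  have h1 : g * n * g⁻¹ ∈ N := hN.conj_mem n hn g
  simpa [commutatorElement_def] using N.mul_mem h1 (N.inv_mem hn)

lemma map_commutator_eq' {G' : Type*} [Group G'] (f : G →* G')
    (hf : Function.Surjective f) :
    Subgroup.map f (commutator G) = commutator G' := by
  rw [commutator_def, Subgroup.map_commutator, Subgroup.map_top_of_surjective _ hf,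
    commutator_def]
end Helpers

section MainInduction
open Subgroup QuotientGroup
universe u

lemma sup_eq_top_aux : ∀ (n : ℕ) (G : Type u) [Group G] [Finite G],
    Nat.card G ≤ n → HypSI G → commutator G ⊔ Subgroup.center G = ⊤ := by
  intro n
  induction n with
  | zero =>
    intro G _ _ hcard _
    exact absurd hcard (by simp [Nat.card_pos.ne'])
  | succ n ih =>
    intro G _ _ hcard hyp
    by_cases hZtop : Subgroup.center G = ⊤
    · rw [hZtop, sup_top_eq]
    by_cases hsi : QuotSubdirectlyIrreducible (⊥ : Subgroup G)
    · rcases hyp ⊥ inferInstance hsi with hab | hc8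
      · exfalso
        apply hZtop
        rw [eq_top_iff]
        intro g _
        rw [Subgroup.mem_center_iff]
        intro h
        have hinj : Function.Injective (QuotientGroup.mk' (⊥ : Subgroup G)) := by
          rw [← MonoidHom.ker_eq_bot_iff, QuotientGroup.ker_mk']
        apply hinj
        rw [map_mul, map_mul]
        exact hab _ _
      · have hC8G : IsC8 G := isC8_of_mulEquiv QuotientGroup.quotientBot hc8
        rw [isC8_commutator_eq_top hC8G, top_sup_eq]
    · -- G is not subdirectly irreducible
      have hGnt : (⊥ : Subgroup G) ≠ ⊤ := by
        intro h
        apply hZtop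
        rw [eq_top_iff]
        intro g _
        have hg : g ∈ (⊥ : Subgroup G) := h.symm ▸ Subgroup.mem_top g
        rw [Subgroup.mem_bot] at hg
        rw [hg]
        exact (Subgroup.center G).one_mem
      set S : Set (Subgroup G) := {X | X.Normal ∧ X ≠ ⊥} with hSdef
      have hSfin : S.Finite := Set.toFinite S
      have hSne : S.Nonempty := ⟨⊤, inferInstance, Ne.symm hGnt⟩
      obtain ⟨N₁, hN₁S, hmin⟩ := Set.Finite.exists_minimalFor id S hSfin hSne
      obtain ⟨hN₁n, hN₁bot⟩ := hN₁S
      haveI := hN₁n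
      have hSinf : sInf {X : Subgroup G | X.Normal ∧ ⊥ < X} = ⊥ := by
        by_contra hne
        exact hsi (bot_lt_iff_ne_bot.mpr hne)
      have hexN₂ : ∃ N₂, (N₂.Normal ∧ N₂ ≠ ⊥) ∧ ¬N₁ ≤ N₂ := by
        by_contra hcon
        push_neg at hcon
        have hle : N₁ ≤ sInf {X : Subgroup G | X.Normal ∧ ⊥ < X} := by
          refine le_sInf fun X hX => ?_
          exact hcon X ⟨hX.1, (bot_lt_iff_ne_bot.mp hX.2)⟩
        rw [hSinf] at hle
        exact hN₁bot (le_bot_iff.mp hle)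
      obtain ⟨N₂, ⟨hN₂n, hN₂bot⟩, hN₁N₂⟩ := hexN₂
      haveI := hN₂n
      have hinf12 : N₁ ⊓ N₂ = ⊥ := by
        by_contra hne12
        have hmem : N₁ ⊓ N₂ ∈ S := ⟨inferInstance, hne12⟩
        have h1 := hmin hmem inf_le_left
        simp only [id] at h1
        exact hN₁N₂ (h1.trans inf_le_right)
      -- dichotomy : N₁ ≤ D ⊔ Z
      have hdich : N₁ ≤ commutator G ⊔ Subgroup.center G := by
        by_cases hK : ⁅(⊤ : Subgroup G), N₁⁆ = ⊥
        · refine le_trans ?_ le_sup_right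
          intro x hx
          rw [Subgroup.mem_center_iff]
          intro g
          have h1 : ⁅g, x⁆ ∈ (⊥ : Subgroup G) :=
            hK ▸ Subgroup.commutator_mem_commutator (Subgroup.mem_top g) hx
          rw [Subgroup.mem_bot] at h1
          exact commutatorElement_eq_one_iff_commute.mp h1
        · have hKS : ⁅(⊤ : Subgroup G), N₁⁆ ∈ S := ⟨inferInstance, hK⟩
          have heq := hmin hKS (commutator_le_right' hN₁n)
          simp only [id] at heq
          refine le_trans ?_ le_sup_left
          rw [commutator_def]
          calc N₁ = ⁅⊤, N₁⁆ := le_antisymm heq (commutator_le_right' hN₁n)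
            _ ≤ ⁅⊤, ⊤⁆ := Subgroup.commutator_mono le_rfl le_top
      -- cardinalities
      have hcardq : ∀ (N : Subgroup G), N.Normal → N ≠ ⊥ → Nat.card (G ⧸ N) ≤ n := by
        intro N hNn hNbot
        haveI := hNn
        have h1 : Nat.card G = Nat.card (G ⧸ N) * Nat.card N :=
          Subgroup.card_eq_card_quotient_mul_card_subgroup N
        have h2 : 1 < Nat.card N := (Subgroup.one_lt_card_iff_ne_bot N).mpr hNbot
        have h3 : 0 < Nat.card (G ⧸ N) := Nat.card_pos
        have h4 : Nat.card (G ⧸ N) < Nat.card G := by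
          calc Nat.card (G ⧸ N) < Nat.card (G ⧸ N) * Nat.card N := by
                exact lt_mul_of_one_lt_right h3 h2
            _ = Nat.card G := h1.symm
        omega
      -- quotient data
      set π₁ := QuotientGroup.mk' N₁ with hπ₁def
      set π₂ := QuotientGroup.mk' N₂ with hπ₂def
      have hπ₁ : Function.Surjective π₁ := QuotientGroup.mk'_surjective N₁
      have hπ₂ : Function.Surjective π₂ := QuotientGroup.mk'_surjective N₂
      set W₁ := (Subgroup.center (G ⧸ N₁)).comap π₁ with hW₁def
      set W₂ := (Subgroup.center (G ⧸ N₂)).comap π₂ with hW₂def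
      have hsup₁ : commutator (G ⧸ N₁) ⊔ Subgroup.center (G ⧸ N₁) = ⊤ :=
        ih (G ⧸ N₁) (hcardq N₁ hN₁n hN₁bot) (hypSI_quotient hyp N₁)
      have hsup₂ : commutator (G ⧸ N₂) ⊔ Subgroup.center (G ⧸ N₂) = ⊤ :=
        ih (G ⧸ N₂) (hcardq N₂ hN₂n hN₂bot) (hypSI_quotient hyp N₂)
      -- Step A : commutator G ⊔ W₁ = ⊤
      have hStepA : commutator G ⊔ W₁ = ⊤ := by
        have h2 : Subgroup.comap π₁ (Subgroup.map π₁ (commutator G ⊔ W₁)) = ⊤ := by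
          rw [Subgroup.map_sup, map_commutator_eq' π₁ hπ₁,
            Subgroup.map_comap_eq_self_of_surjective hπ₁, hsup₁, Subgroup.comap_top]
        rw [Subgroup.comap_map_eq, QuotientGroup.ker_mk'] at h2
        rwa [sup_eq_left.mpr (le_trans (le_comap_center N₁) le_sup_right)] at h2
      -- Step B : W₁ ≤ N₁ ⊔ W₂
      have hC8q : IsC8 ((G ⧸ N₂) ⧸ Subgroup.center (G ⧸ N₂)) :=
        quot_center_c8 (hypSI_quotient hyp N₂) hsup₂
      set Nt₁ := N₁.map π₂ with hNt₁def
      haveI hNt₁n : Nt₁.Normal := hN₁n.map π₂ hπ₂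
      set V := (Subgroup.center ((G ⧸ N₂) ⧸ Nt₁)).comap (QuotientGroup.mk' Nt₁) with hVdef
      haveI hVn : V.Normal := Subgroup.Normal.comap inferInstance _
      set ρ := QuotientGroup.mk' (Subgroup.center (G ⧸ N₂)) with hρdef
      have hρ : Function.Surjective ρ := QuotientGroup.mk'_surjective _
      have hVcomm : ⁅(⊤ : Subgroup (G ⧸ N₂)), V⁆ ≤ Nt₁ := by
        refine Subgroup.commutator_le.mpr fun a _ v hv => ?_
        exact (mem_comap_center_iff Nt₁ v).mp hv a
      have h3 := hC8q (V.map ρ) (hVn.map ρ hρ)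
      have h4 : Subgroup.map ρ V ≤ Subgroup.map ρ Nt₁ := by
        calc Subgroup.map ρ V = ⁅⊤, Subgroup.map ρ V⁆ := h3.symm
          _ = ⁅Subgroup.map ρ ⊤, Subgroup.map ρ V⁆ := by
              rw [Subgroup.map_top_of_surjective _ hρ]
          _ = Subgroup.map ρ ⁅⊤, V⁆ := (Subgroup.map_commutator _ _ _).symm
          _ ≤ Subgroup.map ρ Nt₁ := Subgroup.map_mono hVcomm
      have h5 : V ≤ Nt₁ ⊔ Subgroup.center (G ⧸ N₂) := by
        calc V ≤ Subgroup.comap ρ (Subgroup.map ρ V) := Subgroup.le_comap_map _ _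
          _ ≤ Subgroup.comap ρ (Subgroup.map ρ Nt₁) := Subgroup.comap_mono h4
          _ = Nt₁ ⊔ Subgroup.center (G ⧸ N₂) := by
              rw [Subgroup.comap_map_eq, QuotientGroup.ker_mk']
      have hStepB : W₁ ≤ N₁ ⊔ W₂ := by
        intro w hw
        have hgw : ∀ g : G, ⁅g, w⁆ ∈ N₁ := (mem_comap_center_iff N₁ w).mp hw
        have hwV : π₂ w ∈ V := by
          rw [hVdef, mem_comap_center_iff]
          intro a
          obtain ⟨g, rfl⟩ := hπ₂ a
          rw [← map_commutatorElement]
          exact Subgroup.mem_map_of_mem _ (hgw g)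
        have h6 : π₂ w ∈ Subgroup.map π₂ (N₁ ⊔ W₂) := by
          rw [Subgroup.map_sup, Subgroup.map_comap_eq_self_of_surjective hπ₂]
          exact h5 hwV
        have h7 : w ∈ Subgroup.comap π₂ (Subgroup.map π₂ (N₁ ⊔ W₂)) := h6
        rw [Subgroup.comap_map_eq, QuotientGroup.ker_mk'] at h7
        rwa [sup_eq_left.mpr (le_trans (le_comap_center N₂) le_sup_right)] at h7
      -- Step B' : W₁ ≤ N₁ ⊔ (W₁ ⊓ W₂)
      have hStepB' : W₁ ≤ N₁ ⊔ (W₁ ⊓ W₂) := by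
        intro w hw
        have h8 : w ∈ ((N₁ ⊔ W₂ : Subgroup G) : Set G) := hStepB hw
        rw [Subgroup.normal_mul] at h8
        obtain ⟨a, ha, u, hu, hau⟩ := h8
        have hau2 : a * u = w := hau
        have hu1 : u ∈ W₁ := by
          have h9 : a⁻¹ * w ∈ W₁ := W₁.mul_mem (W₁.inv_mem (le_comap_center N₁ ha)) hw
          rw [← hau2] at h9
          simpa using h9
        have h10 : a * u ∈ N₁ ⊔ (W₁ ⊓ W₂) :=
          Subgroup.mul_mem _ (Subgroup.mem_sup_left ha)
            (Subgroup.mem_sup_right (Subgroup.mem_inf.mpr ⟨hu1, hu⟩))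
        rwa [hau2] at h10
      -- Step C : W₁ ⊓ W₂ ≤ center G
      have hStepC : W₁ ⊓ W₂ ≤ Subgroup.center G := by
        intro u hu
        rw [Subgroup.mem_center_iff]
        intro g
        have h11 : ⁅g, u⁆ ∈ N₁ ⊓ N₂ :=
          Subgroup.mem_inf.mpr ⟨(mem_comap_center_iff N₁ u).mp (Subgroup.mem_inf.mp hu).1 g,
            (mem_comap_center_iff N₂ u).mp (Subgroup.mem_inf.mp hu).2 g⟩
        rw [hinf12, Subgroup.mem_bot] at h11
        exact commutatorElement_eq_one_iff_commute.mp h11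
      -- combine
      rw [eq_top_iff, ← hStepA]
      refine sup_le le_sup_left (le_trans hStepB' (sup_le ?_ ?_))
      · exact le_trans hdich le_rfl
      · exact le_trans (le_trans inf_le_left (le_trans hStepB' (sup_le hdich
          (le_trans hStepC le_sup_right)))) le_rfl
end MainInduction


/-- Let `G` be a finite group in which every subdirectly irreducible quotient is abelian or
satisfies (C8). Then the commutator subgroup `⁅G, G⁆` and the center `Z(G)` are
complementary normal subgroups, `G/⁅G, G⁆` is abelian, and `G/Z(G)` satisfies (C8). -/
theorem abelian_C8_factorization
    {G : Type*} [Group G] [Finite G]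
    (hSI : ∀ (M : Subgroup G) (hM : M.Normal), QuotSubdirectlyIrreducible M →
      QuotAbelian M hM ∨ QuotC8 M hM) :
    commutator G ⊓ Subgroup.center G = ⊥ ∧
    commutator G ⊔ Subgroup.center G = ⊤ ∧
    (∀ x y : G ⧸ commutator G, x * y = y * x) ∧
    IsC8 (G ⧸ Subgroup.center G) := by
  have hyp : HypSI G := hSI
  refine ⟨?_, ?_, ?_, ?_⟩
  · rw [eq_bot_iff]
    intro g hg
    rw [Subgroup.mem_bot]
    by_contra hg1
    obtain ⟨M, hMn, -, hgM, hMSI⟩ := exists_si_kernel ⊥ inferInstance g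
      (by rwa [Subgroup.mem_bot])
    rcases hyp M hMn hMSI with hab | hc8
    · exact hgM (quotAbelian_commutator_le hMn hab (Subgroup.mem_inf.mp hg).1)
    · exact hgM (quotC8_center_le hMn hc8 (Subgroup.mem_inf.mp hg).2)
  · exact sup_eq_top_aux (Nat.card G) G le_rfl hyp
  · intro x y
    induction x using QuotientGroup.induction_on with
    | H a =>
      induction y using QuotientGroup.induction_on with
      | H b =>
        have hmem : ⁅a, b⁆ ∈ commutator G := by
          rw [commutator_def]
          exact Subgroup.commutator_mem_commutator (Subgroup.mem_top a) (Subgroup.mem_top b)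
        have h1 : (QuotientGroup.mk' (commutator G)) ⁅a, b⁆ = 1 :=
          (QuotientGroup.eq_one_iff _).mpr hmem
        rw [map_commutatorElement] at h1
        exact commutatorElement_eq_one_iff_commute.mp h1
  · exact quot_center_c8 hyp (sup_eq_top_aux (Nat.card G) G le_rfl hyp)
end

section
/- Let G be a finite group such that for every normal subgroup M of G for which the quotient G/M is subdirectly irreducible, G/M is solvable or G/M satisfies (C8), and let (S, R) be the unique pair of normal subgroups of G with S ⊓ R = ⊥, S ⊔ R = ⊤, G/S solvable, and G/R satisfying (C8). Then a normal subgroup X of G is contained in the center Z(G) if and only if X ≤ R and the image (X ⊔ S)/S of X in G/S is contained in the center of G/S. -/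
/-- Let `G` be a finite group in which every subdirectly irreducible quotient is solvable
or satisfies (C8), and let `(S, R)` be the (unique) pair of complementary normal subgroups
with `G/S` solvable and `G/R` satisfying (C8). Then a normal subgroup `X` of `G` is central
if and only if `X ≤ R` and the image of `X` in `G/S` is contained in the center of `G/S`. -/
theorem central_iff_le_R_and_central_image
    {G : Type*} [Group G] [Finite G]
    (hSI : ∀ (M : Subgroup G) (hM : M.Normal), QuotSubdirectlyIrreducible M →
      QuotSolvable M hM ∨ QuotC8 M hM)
    (S R : Subgroup G) [hS : S.Normal] [hR : R.Normal]
    (hmeet : S ⊓ R = ⊥) (hjoin : S ⊔ R = ⊤)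
    (hsolv : IsSolvable (G ⧸ S)) (hc8 : IsC8 (G ⧸ R))
    (X : Subgroup G) (hX : X.Normal) :
    X ≤ Subgroup.center G ↔
      X ≤ R ∧ X.map (QuotientGroup.mk' S) ≤ Subgroup.center (G ⧸ S) := by
  constructor
  · intro hXZ
    constructor
    · -- use C8 on the image of X in G/R
      have hnorm : (X.map (QuotientGroup.mk' R)).Normal :=
        hX.map _ (QuotientGroup.mk'_surjective R)
      have hcentIm : X.map (QuotientGroup.mk' R) ≤ Subgroup.center (G ⧸ R) := by
        rintro y ⟨x, hx, rfl⟩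
        rw [Subgroup.mem_center_iff]
        intro q
        induction q using QuotientGroup.induction_on with
        | H g =>
          have hxc := (Subgroup.mem_center_iff.mp (hXZ hx)) g
          show ((g * x : G) : G ⧸ R) = ((x * g : G) : G ⧸ R)
          rw [hxc]
      have hbot : X.map (QuotientGroup.mk' R) = ⊥ := by
        have h1 := hc8 _ hnorm
        rw [← h1, eq_bot_iff, Subgroup.commutator_le]
        intro g _ x hx
        have := Subgroup.mem_center_iff.mp (hcentIm hx) g
        rw [commutatorElement_def, this]
        group
        exact Subgroup.one_mem _
      intro x hx
      have : (QuotientGroup.mk' R) x ∈ X.map (QuotientGroup.mk' R) :=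
        Subgroup.mem_map_of_mem _ hx
      rw [hbot, Subgroup.mem_bot] at this
      rwa [← QuotientGroup.ker_mk' R, MonoidHom.mem_ker]
    · rintro y ⟨x, hx, rfl⟩
      rw [Subgroup.mem_center_iff]
      intro q
      induction q using QuotientGroup.induction_on with
      | H g =>
        have hxc := (Subgroup.mem_center_iff.mp (hXZ hx)) g
        show ((g * x : G) : G ⧸ S) = ((x * g : G) : G ⧸ S)
        rw [hxc]
  · rintro ⟨hXR, hcent⟩ x hx
    rw [Subgroup.mem_center_iff]
    intro g
    have hc : g * x * g⁻¹ * x⁻¹ ∈ X :=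
      X.mul_mem (hX.conj_mem x hx g) (X.inv_mem hx)
    have hcS : g * x * g⁻¹ * x⁻¹ ∈ S := by
      have hxS : (QuotientGroup.mk' S) x ∈ Subgroup.center (G ⧸ S) :=
        hcent (Subgroup.mem_map_of_mem _ hx)
      have h : ((g : G ⧸ S)) * ((x : G ⧸ S)) = ((x : G ⧸ S)) * ((g : G ⧸ S)) :=
        Subgroup.mem_center_iff.mp hxS ((g : G ⧸ S))
      rw [← QuotientGroup.ker_mk' S, MonoidHom.mem_ker]
      show ((g * x * g⁻¹ * x⁻¹ : G) : G ⧸ S) = 1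
      simp only [QuotientGroup.mk_mul, QuotientGroup.mk_inv]
      rw [h]
      group
    have hbot : g * x * g⁻¹ * x⁻¹ ∈ S ⊓ R := ⟨hcS, hXR hc⟩
    rw [hmeet, Subgroup.mem_bot] at hbot
    have h2 : g * x * g⁻¹ = x := mul_inv_eq_one.mp hbot
    exact mul_inv_eq_iff_eq_mul.mp h2
end

section
/- Let G be a finite nontrivial group satisfying (C8) (that is, ⁅G, X⁆ = X for every normal subgroup X of G) such that for every normal subgroup M of G for which G/M is subdirectly irreducible, G/M is neutral or almost neutral. If (D, T, N) is a relevant triple of G, then G has a minimal nontrivial normal subgroup γ (an atom of the lattice of normal subgroups of G) with γ not contained in D. -/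
/-- A group `Q` is *neutral* if `⁅X, Y⁆ = X ⊓ Y` for all normal subgroups `X, Y` of `Q`. -/
def IsNeutral (Q : Type*) [Group Q] : Prop :=
  ∀ X Y : Subgroup Q, X.Normal → Y.Normal → ⁅X, Y⁆ = X ⊓ Y

/-- A subdirectly irreducible group `Q` with monolith `μ` is *almost neutral* if `Q` is
nonabelian, `μ` is the largest normal subgroup `C` with `⁅μ, C⁆ = 1`, and the interval of
normal subgroups above `μ` is neutral. -/
def IsAlmostNeutral (Q : Type*) [Group Q] : Prop :=
  (¬ ∀ x y : Q, x * y = y * x) ∧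
  ∃ μ : Subgroup Q, μ.Normal ∧ ⊥ < μ ∧
    (∀ X : Subgroup Q, X.Normal → ⊥ < X → μ ≤ X) ∧
    ⁅μ, μ⁆ = ⊥ ∧ (∀ C : Subgroup Q, C.Normal → ⁅μ, C⁆ = ⊥ → C ≤ μ) ∧
    (∀ X Y : Subgroup Q, X.Normal → Y.Normal → X ≤ Y → μ ≤ X → ⁅Y, Y⁆ ≤ X → X = Y)

/-- The quotient `G/M` is neutral. -/
def QuotNeutral {G : Type*} [Group G] (M : Subgroup G) (hM : M.Normal) : Prop :=
  haveI := hM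
  IsNeutral (G ⧸ M)

/-- The quotient `G/M` is almost neutral. -/
def QuotAlmostNeutral {G : Type*} [Group G] (M : Subgroup G) (hM : M.Normal) : Prop :=
  haveI := hM
  IsAlmostNeutral (G ⧸ M)

open scoped Pointwise
open scoped commutatorElement

/-- If both factors of a sup have commutator with `C` inside a normal `L`, so does the sup. -/
lemma commutator_sup_le_of_le {G : Type*} [Group G] {A B C L : Subgroup G}
    (hL : L.Normal) (hB : B.Normal)
    (h1 : ⁅A, C⁆ ≤ L) (h2 : ⁅B, C⁆ ≤ L) : ⁅A ⊔ B, C⁆ ≤ L := by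
  haveI := hB
  rw [Subgroup.commutator_le]
  intro g hg c hc
  have hg' : g ∈ (A : Set G) * (B : Set G) := by
    rw [← Subgroup.mul_normal A B]; exact hg
  obtain ⟨a, ha, b, hb, rfl⟩ := hg'
  have key : ⁅a * b, c⁆ = a * ⁅b, c⁆ * a⁻¹ * ⁅a, c⁆ := by
    simp only [commutatorElement_def]; group
  rw [key]
  exact L.mul_mem (hL.conj_mem _ (h2 (Subgroup.commutator_mem_commutator hb hc)) a)
    (h1 (Subgroup.commutator_mem_commutator ha hc))

/-- Let `G` be a finite nontrivial (C8)-group in which every subdirectly irreducible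
quotient is neutral or almost neutral. If `(D, T, N)` is a relevant triple of `G`, then `G`
has an atom `γ` in its lattice of normal subgroups with `γ ≰ D`. -/
theorem C8_relevant_triple_atom_not_below
    {G : Type*} [Group G] [Finite G] [Nontrivial G] (hC8 : IsC8 G)
    (hSI : ∀ (M : Subgroup G) (hM : M.Normal), QuotSubdirectlyIrreducible M →
      QuotNeutral M hM ∨ QuotAlmostNeutral M hM)
    (D T N : Subgroup G) (h : RelevantTriple D T N) :
    ∃ γ : Subgroup G, γ.Normal ∧ ⊥ < γ ∧
      (∀ X : Subgroup G, X.Normal → X < γ → X = ⊥) ∧ ¬ γ ≤ D := by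
  obtain ⟨hDn, hTn, hNn, hDT, hcov, hTT, -, -⟩ := h
  haveI := hDn; haveI := hTn
  -- X : a minimal normal subgroup of G that is ≤ T but not ≤ D
  set S : Set (Subgroup G) := {Y | Y.Normal ∧ ¬ Y ≤ D ∧ Y ≤ T} with hSdef
  have hTS : T ∈ S := ⟨hTn, hDT.2, le_rfl⟩
  obtain ⟨X, hXS, hXmin⟩ := Set.Finite.exists_minimalFor id S (Set.toFinite S) ⟨T, hTS⟩
  obtain ⟨hXn, hXD, hXT⟩ := hXS
  haveI := hXn
  have hXbot : ⊥ < X := bot_lt_iff_ne_bot.mpr (fun hbot => hXD (hbot ▸ bot_le))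
  -- γ : a minimal nontrivial normal subgroup of G contained in X (an atom)
  set Sg : Set (Subgroup G) := {Y | Y.Normal ∧ ⊥ < Y ∧ Y ≤ X} with hSgdef
  obtain ⟨γ, hγS, hγmin⟩ := Set.Finite.exists_minimalFor id Sg (Set.toFinite Sg)
    ⟨X, hXn, hXbot, le_rfl⟩
  obtain ⟨hγn, hγbot, hγX⟩ := hγS
  have hatom : ∀ W : Subgroup G, W.Normal → W < γ → W = ⊥ := by
    intro W hWn hWγ
    by_contra hWne
    have hWSg : W ∈ Sg := ⟨hWn, bot_lt_iff_ne_bot.mpr hWne, hWγ.le.trans hγX⟩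
    have heq : γ = W := le_antisymm (hγmin hWSg hWγ.le) hWγ.le
    exact hWγ.ne heq.symm
  by_cases hγD : γ ≤ D
  · exfalso
    -- M : a normal subgroup maximal with respect to γ ≰ M
    set Sm : Set (Subgroup G) := {Y | Y.Normal ∧ ¬ γ ≤ Y} with hSmdef
    have hbotSm : (⊥ : Subgroup G) ∈ Sm :=
      ⟨⟨fun n hn g => by rw [Subgroup.mem_bot] at hn ⊢; simp [hn]⟩, fun hle => (bot_lt_iff_ne_bot.mp hγbot) (le_bot_iff.mp hle)⟩
    obtain ⟨M, hMS, hMmax⟩ := Set.Finite.exists_maximalFor id Sm (Set.toFinite Sm) ⟨⊥, hbotSm⟩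
    obtain ⟨hMn, hγM⟩ := hMS
    haveI := hMn
    -- every normal subgroup strictly above M contains γ
    have hmono : ∀ Y : Subgroup G, Y.Normal → M < Y → γ ≤ Y := by
      intro Y hYn hMY
      by_contra hne
      exact hMY.ne (le_antisymm hMY.le (hMmax ⟨hYn, hne⟩ hMY.le))
    -- G / M is subdirectly irreducible
    have hQSI : QuotSubdirectlyIrreducible M := by
      rw [QuotSubdirectlyIrreducible]
      have h1 : γ ⊔ M ≤ sInf {Z : Subgroup G | Z.Normal ∧ M < Z} :=
        le_sInf fun Y hY => sup_le (hmono Y hY.1 hY.2) hY.2.le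
      have h2 : M < γ ⊔ M :=
        lt_of_le_of_ne le_sup_right (fun he => hγM (le_sup_left.trans he.ge))
      exact lt_of_lt_of_le h2 h1
    have hXM : ¬ X ≤ M := fun hle => hγM (hγX.trans hle)
    -- X ⊓ M ≤ D by minimality of X
    have hXMn : (X ⊓ M).Normal :=
      ⟨fun n hn g => Subgroup.mem_inf.mpr ⟨hXn.conj_mem n (Subgroup.mem_inf.mp hn).1 g,
        hMn.conj_mem n (Subgroup.mem_inf.mp hn).2 g⟩⟩
    have hXMD : X ⊓ M ≤ D := by
      by_contra hc
      have hmem : X ⊓ M ∈ S := ⟨hXMn, hc, inf_le_left.trans hXT⟩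
      exact hXM ((hXmin hmem inf_le_left).trans inf_le_right)
    -- the two key subgroups
    set A0 : Subgroup G := (D ⊓ X) ⊔ M with hA0def
    set B : Subgroup G := X ⊔ M with hBdef
    have hA0n : A0.Normal := Subgroup.sup_normal _ _
    have hBn : B.Normal := Subgroup.sup_normal _ _
    -- commutator bounds
    have hDXle : D ⊓ X ≤ A0 := le_sup_left
    have hXX : ⁅X, X⁆ ≤ D ⊓ X :=
      le_inf ((Subgroup.commutator_mono hXT hXT).trans hTT) (Subgroup.commutator_le_right X X)
    have hXMc : ⁅X, M⁆ ≤ D ⊓ X := by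
      have h1 : ⁅X, M⁆ ≤ X ⊓ M :=
        le_inf (Subgroup.commutator_le_left X M) (Subgroup.commutator_le_right X M)
      exact le_inf (h1.trans hXMD) (h1.trans inf_le_left)
    have hXB : ⁅X, B⁆ ≤ A0 := by
      rw [Subgroup.commutator_comm]
      exact commutator_sup_le_of_le hA0n hMn (hXX.trans hDXle)
        ((Subgroup.commutator_comm M X ▸ hXMc).trans hDXle)
    have hMB : ⁅M, B⁆ ≤ A0 := by
      rw [Subgroup.commutator_comm]
      exact commutator_sup_le_of_le hA0n hMn (hXMc.trans hDXle)
        ((Subgroup.commutator_le_right M M).trans le_sup_right)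
    have hBB : ⁅B, B⁆ ≤ A0 := commutator_sup_le_of_le hA0n hMn hXB hMB
    -- pass to the quotient G / M
    set f : G →* G ⧸ M := QuotientGroup.mk' M with hfdef
    have hfs : Function.Surjective f := QuotientGroup.mk'_surjective M
    have hAn' : (Subgroup.map f A0).Normal := hA0n.map f hfs
    have hBn' : (Subgroup.map f B).Normal := hBn.map f hfs
    have hABle : Subgroup.map f A0 ≤ Subgroup.map f B :=
      Subgroup.map_mono (sup_le_sup_right inf_le_right M)
    have hBBbar : ⁅Subgroup.map f B, Subgroup.map f B⁆ ≤ Subgroup.map f A0 := by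
      rw [← Subgroup.map_commutator]
      exact Subgroup.map_mono hBB
    -- in either case, map f B ≤ map f A0
    have key : Subgroup.map f B ≤ Subgroup.map f A0 := by
      rcases hSI M hMn hQSI with hNeu | hAN
      · have hNeu' : IsNeutral (G ⧸ M) := hNeu
        have he : ⁅Subgroup.map f B, Subgroup.map f B⁆ = Subgroup.map f B := by
          rw [hNeu' (Subgroup.map f B) (Subgroup.map f B) hBn' hBn', inf_idem]
        exact he ▸ hBBbar
      · have hAN' : IsAlmostNeutral (G ⧸ M) := hAN
        obtain ⟨-, μ, hμn, hμbot, hμmin, -, -, hμint⟩ := hAN'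
        have hAne : ⊥ < Subgroup.map f A0 := by
          rw [bot_lt_iff_ne_bot]
          intro he
          have h1 : A0 ≤ f.ker := (Subgroup.map_eq_bot_iff A0).mp he
          rw [hfdef, QuotientGroup.ker_mk'] at h1
          exact hγM ((le_inf hγD hγX).trans (hDXle.trans h1))
        have hmu : μ ≤ Subgroup.map f A0 := hμmin _ hAn' hAne
        exact (hμint _ _ hAn' hBn' hABle hmu hBBbar).ge
    -- pull back : B ≤ A0, hence X ≤ (D ⊓ X) ⊔ M
    have hBA0 : B ≤ A0 := by
      have h1 : B ≤ Subgroup.comap f (Subgroup.map f A0) :=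
        Subgroup.map_le_iff_le_comap.mp key
      rwa [Subgroup.comap_map_eq, hfdef, QuotientGroup.ker_mk',
        sup_of_le_left le_sup_right] at h1
    have hXA0 : X ≤ (D ⊓ X) ⊔ M := le_sup_left.trans hBA0
    -- conclude X ≤ D, contradiction
    have hfinal : X ≤ D := by
      intro x hx
      have hx2 : x ∈ ((D ⊓ X : Subgroup G) : Set G) * (M : Set G) := by
        rw [← Subgroup.mul_normal]; exact hXA0 hx
      obtain ⟨a, ha, m, hm, rfl⟩ := hx2
      have haX : a ∈ X := (Subgroup.mem_inf.mp ha).2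
      have hmX : m ∈ X := by
        have h' := X.mul_mem (X.inv_mem haX) hx
        rwa [inv_mul_cancel_left] at h'
      have hmD : m ∈ D := hXMD (Subgroup.mem_inf.mpr ⟨hmX, hm⟩)
      exact D.mul_mem (Subgroup.mem_inf.mp ha).1 hmD
    exact hXD hfinal
  · exact ⟨γ, hγn, hγbot, hatom, hγD⟩
end

section
/- Let L be a finite modular lattice with least element ⊥, let ∇ ∈ L, and let Δ₁, …, Δₙ ∈ L (n ≥ 1) be such that each Δᵢ either equals ∇ or is a lower cover of ∇ (Δᵢ ⋖ ∇), and Δ₁ ⊓ ⋯ ⊓ Δₙ = ⊥. Then for every index i with Δᵢ ⋖ ∇ there exists an atom γ of L with γ ≤ ∇, γ ⊓ Δᵢ = ⊥, and γ ⊔ Δᵢ = ∇. -/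
/-- Let `L` be a finite modular lattice with least element `⊥`, let `∇ ∈ L`, and let
`Δ₁, …, Δₙ` (`n ≥ 1`) be such that each `Δᵢ` equals `∇` or is a lower cover of `∇`, and
`Δ₁ ⊓ ⋯ ⊓ Δₙ = ⊥`. Then for every `i` with `Δᵢ ⋖ ∇` there is an atom `γ ≤ ∇` that is a
complement of `Δᵢ` in the interval `[⊥, ∇]`. -/
theorem atom_complement_of_lower_cover
    {L : Type*} [Lattice L] [IsModularLattice L] [Finite L] [OrderBot L]
    {n : ℕ} (hn : 1 ≤ n) (nabla : L) (Δ : Fin n → L)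
    (hcov : ∀ i, Δ i = nabla ∨ Δ i ⋖ nabla)
    (hinf : Finset.univ.inf' (Finset.univ_nonempty_iff.mpr ⟨⟨0, hn⟩⟩) Δ = ⊥) :
    ∀ i, Δ i ⋖ nabla →
      ∃ γ : L, IsAtom γ ∧ γ ≤ nabla ∧ γ ⊓ Δ i = ⊥ ∧ γ ⊔ Δ i = nabla := by
  intro i hi
  -- the set of "partial complements"
  have hSne : nabla ∈ {c : L | c ≤ nabla ∧ c ⊔ Δ i = nabla} :=
    ⟨le_refl _, sup_eq_left.mpr hi.le⟩
  obtain ⟨c, ⟨hc_le, hc_sup⟩, hc_min⟩ :=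
    show ∃ c ∈ {c : L | c ≤ nabla ∧ c ⊔ Δ i = nabla}, ∀ a ∈ {c : L | c ≤ nabla ∧ c ⊔ Δ i = nabla},
        id a ≤ id c → id c = id a from by
      obtain ⟨c, hc, hmin⟩ := Set.Finite.exists_minimalFor id _
        (Set.toFinite {c : L | c ≤ nabla ∧ c ⊔ Δ i = nabla}) ⟨nabla, hSne⟩
      exact ⟨c, hc, fun a ha hle => le_antisymm (hmin ha hle) hle⟩
  simp only [id] at hc_min
  -- first: c ⊓ Δ i = ⊥
  have hcΔ : c ⊓ Δ i = ⊥ := by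
    by_contra hne
    -- find j with c ⊓ Δ i ≰ Δ j
    have : ∃ j, ¬ c ⊓ Δ i ≤ Δ j := by
      by_contra h
      push_neg at h
      exact hne (le_antisymm (hinf ▸ Finset.le_inf' _ _ fun j _ => h j) bot_le)
    obtain ⟨j, hj⟩ := this
    have hcj : ¬ c ≤ Δ j := fun h => hj (le_trans inf_le_left h)
    have hΔj : Δ j ⋖ nabla := by
      rcases hcov j with h | h
      · exact absurd (h ▸ le_trans inf_le_left hc_le) hj
      · exact h
    -- Δ j ⊔ c = nabla
    have hsup : Δ j ⊔ c = nabla := by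
      rcases hΔj.eq_or_eq (le_sup_left : Δ j ≤ Δ j ⊔ c)
        (sup_le hΔj.le hc_le) with h | h
      · exact absurd (sup_eq_left.mp h) hcj
      · exact h
    -- by lower modularity, Δ j ⊓ c ⋖ c
    have hcovc : Δ j ⊓ c ⋖ c := inf_covBy_of_covBy_sup_left (hsup ▸ hΔj)
    -- (c ⊓ Δ j) ⊔ Δ i = nabla
    have hsup' : (c ⊓ Δ j) ⊔ Δ i = nabla := by
      rcases hi.eq_or_eq (le_sup_right : Δ i ≤ (c ⊓ Δ j) ⊔ Δ i)
        (sup_le (le_trans inf_le_left hc_le) hi.le) with h | h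
      · -- then c ⊓ Δ j ≤ Δ i, forcing c ⊓ Δ i = c ⊓ Δ j ≤ Δ j, contradiction
        exfalso
        have h1 : c ⊓ Δ j ≤ c ⊓ Δ i :=
          le_inf inf_le_left (le_trans le_sup_left h.le)
        have h2 : c ⊓ Δ i ≠ c := fun hc => by
          have : c ≤ Δ i := hc ▸ inf_le_right
          exact hi.ne (by rw [← hc_sup, sup_eq_right.mpr this])
        have h3 : c ⊓ Δ i = c ⊓ Δ j := by
          rcases (inf_comm (Δ j) c ▸ hcovc).eq_or_eq h1
            (inf_le_left : c ⊓ Δ i ≤ c) with h' | h'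
          · exact h'
          · exact absurd h' h2
        exact hj (h3 ▸ inf_le_right)
      · exact h
    -- contradiction with minimality of c
    have hlt : c ⊓ Δ j ≠ c := fun h => hcj (h ▸ inf_le_right)
    exact hlt (hc_min (c ⊓ Δ j) ⟨le_trans inf_le_left hc_le, hsup'⟩ inf_le_left).symm
  -- c ≠ ⊥
  have hcbot : c ≠ ⊥ := fun h => hi.ne (by rw [← hc_sup, h, bot_sup_eq])
  obtain ⟨γ, hγ, hγc⟩ := (eq_bot_or_exists_atom_le c).resolve_left hcbot
  refine ⟨γ, hγ, le_trans hγc hc_le, ?_, ?_⟩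
  · exact le_antisymm (hcΔ ▸ inf_le_inf_right _ hγc) bot_le
  · rcases hi.eq_or_eq (le_sup_right : Δ i ≤ γ ⊔ Δ i)
      (sup_le (le_trans hγc hc_le) hi.le) with h | h
    · exfalso
      have : γ ≤ c ⊓ Δ i := le_inf hγc (le_trans le_sup_left h.le)
      exact hγ.1 (le_antisymm (hcΔ ▸ this) bot_le)
    · exact h
end

section
/- Let L be a modular lattice with least element ⊥ and greatest element ⊤, and let z, c, d, g ∈ L satisfy z ⊓ c = ⊥, z ⊔ c = ⊤, z ≤ d, z ⋖ g (g covers z), and g ≰ d. Then d ⊓ (g ⊓ c) = ⊥, d ⊔ (g ⊓ c) = d ⊔ g, and d ⋖ d ⊔ g. -/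
/-- In a modular lattice with `⊥` and `⊤`: if `z ⊓ c = ⊥`, `z ⊔ c = ⊤`, `z ≤ d`, `g` covers
`z`, and `g ≰ d`, then `d ⊓ (g ⊓ c) = ⊥`, `d ⊔ (g ⊓ c) = d ⊔ g`, and `d ⊔ g` covers `d`. -/
theorem modular_cover_transfer
    {L : Type*} [Lattice L] [IsModularLattice L] [BoundedOrder L]
    {z c d g : L} (hzc : z ⊓ c = ⊥) (hzc' : z ⊔ c = ⊤)
    (hzd : z ≤ d) (hzg : z ⋖ g) (hgd : ¬ g ≤ d) :
    d ⊓ (g ⊓ c) = ⊥ ∧ d ⊔ (g ⊓ c) = d ⊔ g ∧ d ⋖ d ⊔ g := by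
  have hdg : d ⊓ g = z := by
    rcases hzg.eq_or_eq (le_inf hzd hzg.le) inf_le_right with h | h
    · exact h
    · exact absurd (h ▸ inf_le_left) hgd
  have h1 : d ⊓ (g ⊓ c) = ⊥ := by
    rw [← inf_assoc, hdg, hzc]
  have hg : z ⊔ (g ⊓ c) = g := by
    rw [inf_comm, ← sup_inf_assoc_of_le c hzg.le, hzc', top_inf_eq]
  refine ⟨h1, ?_, ?_⟩
  · calc d ⊔ (g ⊓ c) = (d ⊔ z) ⊔ (g ⊓ c) := by rw [sup_eq_left.2 hzd]
    _ = d ⊔ (z ⊔ (g ⊓ c)) := sup_assoc d z _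
    _ = d ⊔ g := by rw [hg]
  · have := hdg ▸ hzg
    exact covBy_sup_of_inf_covBy_right this
end

section
/- Let G be a finite group with ⁅G, G⁆ ⊓ Z(G) = ⊥ and ⁅G, G⁆ ⊔ Z(G) = ⊤, where ⁅G, G⁆ is the commutator subgroup and Z(G) the center. Let (D, T, N) be a relevant triple of G with Z(G) ≤ D, and let γ be a normal subgroup of G that covers Z(G) in the lattice of normal subgroups (Z(G) < γ and no normal subgroup lies strictly between) with γ not contained in D. Then the normal subgroup A := γ ⊓ ⁅G, G⁆ satisfies A ⊓ D = ⊥, A ⊔ D = T, and A is commutative. -/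
open scoped Pointwise


/-- Let `G` be a finite group in which the commutator subgroup and the center are
complementary normal subgroups, let `(D, T, N)` be a relevant triple with `Z(G) ≤ D`, and
let `γ` be a normal subgroup covering `Z(G)` in the lattice of normal subgroups with
`γ ≰ D`. Then `A := γ ⊓ ⁅G, G⁆` satisfies `A ⊓ D = ⊥`, `A ⊔ D = T`, and `A` is
commutative. -/
theorem splitting_construction
    {G : Type*} [Group G] [Finite G]
    (hmeet : commutator G ⊓ Subgroup.center G = ⊥)
    (hjoin : commutator G ⊔ Subgroup.center G = ⊤)
    (D T N : Subgroup G) (h : RelevantTriple D T N)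
    (hZD : Subgroup.center G ≤ D)
    (γ : Subgroup G) (hγ : γ.Normal) (hZγ : Subgroup.center G < γ)
    (hcov : ∀ X : Subgroup G, X.Normal → Subgroup.center G < X → X < γ → False)
    (hγD : ¬ γ ≤ D) :
    (γ ⊓ commutator G) ⊓ D = ⊥ ∧ (γ ⊓ commutator G) ⊔ D = T ∧
    (∀ a b : G, a ∈ γ ⊓ commutator G → b ∈ γ ⊓ commutator G → a * b = b * a) := by
  obtain ⟨hD, hT, hN, hDT, hupper, hTTD, hTN, hNmax⟩ := h
  haveI := hD
  haveI := hγ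
  have hZle : Subgroup.center G ≤ γ := le_of_lt hZγ
  -- T ≤ D ⊔ γ
  have hDγ : D < D ⊔ γ := by
    refine lt_of_le_of_ne le_sup_left fun he => hγD ?_
    rw [he]; exact le_sup_right
  have hTle : T ≤ D ⊔ γ := hupper (D ⊔ γ) (Subgroup.sup_normal D γ) hDγ
  -- γ ≤ T
  have hγT : γ ≤ T := by
    by_contra hne
    have hlt : γ ⊓ T < γ := lt_of_le_of_ne inf_le_left fun he => hne (by
      rw [← he]; exact inf_le_right)
    have hZγT : Subgroup.center G ≤ γ ⊓ T := le_inf hZle (hZD.trans hDT.le)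
    have hZeq : γ ⊓ T ≤ Subgroup.center G := by
      by_contra hc
      exact hcov (γ ⊓ T) (Subgroup.normal_inf_normal γ T)
        (lt_of_le_of_ne hZγT fun he => hc (le_of_eq he.symm)) hlt
    -- then T ≤ D, contradiction
    have hTD : T ≤ D := by
      intro t ht
      have : t ∈ ((D : Set G) * (γ : Set G)) := by
        rw [← Subgroup.normal_mul]
        exact hTle ht
      obtain ⟨d, hd, g, hg, rfl⟩ := this
      have hgT : g ∈ T := by
        have : d⁻¹ * (d * g) ∈ T := T.mul_mem (T.inv_mem (hDT.le hd)) ht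
        simpa using this
      exact D.mul_mem hd (hZD (hZeq ⟨hg, hgT⟩))
    exact absurd hTD (not_le_of_gt hDT)
  -- γ ⊓ D ≤ center
  have hγDZ : γ ⊓ D ≤ Subgroup.center G := by
    by_contra hc
    have hZγD : Subgroup.center G ≤ γ ⊓ D := le_inf hZle hZD
    have hlt : γ ⊓ D < γ := lt_of_le_of_ne inf_le_left fun he => hγD (by
      rw [← he]; exact inf_le_right)
    exact hcov (γ ⊓ D) (Subgroup.normal_inf_normal γ D)
      (lt_of_le_of_ne hZγD fun he => hc (le_of_eq he.symm)) hlt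
  -- A ⊓ D = ⊥
  have hADbot : (γ ⊓ commutator G) ⊓ D = ⊥ := by
    rw [eq_bot_iff, ← hmeet]
    intro x ⟨⟨hx1, hx2⟩, hx3⟩
    exact ⟨hx2, hγDZ ⟨hx1, hx3⟩⟩
  refine ⟨hADbot, ?_, ?_⟩
  · -- A ⊔ D = T
    refine le_antisymm (sup_le (inf_le_left.trans hγT) hDT.le) ?_
    intro t ht
    have : t ∈ ((D : Set G) * (γ : Set G)) := by
      rw [← Subgroup.normal_mul]; exact hTle ht
    obtain ⟨d, hd, g, hg, rfl⟩ := this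
    have : g ∈ ((commutator G : Set G) * (Subgroup.center G : Set G)) := by
      rw [← Subgroup.mul_normal, hjoin]; trivial
    obtain ⟨c, hc, z, hz, rfl⟩ := this
    have hcA : c ∈ γ ⊓ commutator G := by
      refine ⟨?_, hc⟩
      have : (c * z) * z⁻¹ ∈ γ := γ.mul_mem hg (γ.inv_mem (hZle hz))
      simpa using this
    have h1 : d ∈ (γ ⊓ commutator G) ⊔ D := (le_sup_right : D ≤ _) hd
    have h2 : c ∈ (γ ⊓ commutator G) ⊔ D := (le_sup_left : γ ⊓ commutator G ≤ _) hcA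
    have h3 : z ∈ (γ ⊓ commutator G) ⊔ D := (le_sup_right : D ≤ _) (hZD hz)
    simpa [mul_assoc] using Subgroup.mul_mem _ h1 (Subgroup.mul_mem _ h2 h3)
  · -- A abelian
    intro a b ha hb
    rw [← commutatorElement_eq_one_iff_mul_comm, ← Subgroup.mem_bot, ← hADbot]
    have hA := γ ⊓ commutator G
    refine ⟨?_, ?_⟩
    · show a * b * a⁻¹ * b⁻¹ ∈ γ ⊓ commutator G
      exact Subgroup.mul_mem _ (Subgroup.mul_mem _ (Subgroup.mul_mem _ ha hb)
        (Subgroup.inv_mem _ ha)) (Subgroup.inv_mem _ hb)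
    · exact hTTD (Subgroup.commutator_mem_commutator
        (hγT (Subgroup.mem_inf.mp ha).1) (hγT (Subgroup.mem_inf.mp hb).1))
end
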